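/- arXiv:1603.07280 — 7 statements merged into one kernel-verified Lean document; each statement's English description precedes it below -/
import Mathlib

section
/- Let n > 2k, q > k and λ₀ > 0. Assume there exists a classical radial solution of (P_{λ₀}). Then for every λ ∈ (0, λ₀) the problem (P_λ) has a maximal bounded classical radial solution, i.e. a classical radial solution u_max such that u ≤ u_max on [0,1] for every radial subsolution u. Moreover, the maximal solutions are monotone in λ: if 0 < λ₁ < λ₂ < λ₀ and u_{λ₁}, u_{λ₂} are the corresponding maximal solutions, then u_{λ₂} ≤ u_{λ₁} on [0,1]. -/
open Real Set Filter MeasureTheory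

noncomputable section

/-- `c_{n,k} = (1/n) * binom(n,k)`. -/
def cnk (n k : ℕ) : ℝ := (n.choose k : ℝ) / n

/-- The critical exponent `q*(k,σ) = ((n+2)k + σ(k+1))/(n-2k)`. -/
def qstar (n k : ℕ) (σ : ℝ) : ℝ :=
  (((n : ℝ) + 2) * k + σ * ((k : ℝ) + 1)) / ((n : ℝ) - 2 * k)

/-- The Joseph–Lundgren type exponent `q_JL(k,σ)` (finite formula, valid
for `n > 2k + 8 + 4σ/k`). -/
def qJL (n k : ℕ) (σ : ℝ) : ℝ :=
  (k : ℝ) *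
    (((k : ℝ) * ((k : ℝ) + 1) * n - (k : ℝ) ^ 2 * (2 - σ) + 2 * k + σ -
        2 * Real.sqrt ((k : ℝ) * (2 * k + σ) * (((k : ℝ) + 1) * n - (k : ℝ) * (2 - σ)))) /
      ((k : ℝ) * ((k : ℝ) + 1) * n - 2 * (k : ℝ) ^ 2 * ((k : ℝ) + 3) - 2 * k * σ -
        2 * Real.sqrt ((k : ℝ) * (2 * k + σ) * (((k : ℝ) + 1) * n - (k : ℝ) * (2 - σ)))))

/-- `λ̃(k,σ) = c_{n,k} τ_σ^k (n - 2k - k τ_σ)` with `τ_σ = (2k+σ)/(q-k)`. -/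
def lamTilde (n k : ℕ) (q σ : ℝ) : ℝ :=
  cnk n k * ((2 * (k : ℝ) + σ) / (q - k)) ^ k *
    ((n : ℝ) - 2 * k - (k : ℝ) * ((2 * (k : ℝ) + σ) / (q - k)))

/-- `μ*(k,σ) = binom(n,k) ((n+σ)/n) (n-2k)^k / (k+1)^{k+1}`. -/
def muStar (n k : ℕ) (σ : ℝ) : ℝ :=
  (n.choose k : ℝ) * (((n : ℝ) + σ) / n) * ((n : ℝ) - 2 * k) ^ k / ((k : ℝ) + 1) ^ (k + 1)

/-- A classical radial solution of problem `(P_λ)`: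
`u ∈ C²((0,1)) ∩ C¹([0,1])`, `u'(0) = 0`, `u(1) = 0`, `u < 0` on `(0,1)`,
`(r^{n-i} (u')^i)' ≥ 0` on `(0,1)` for `i = 1,…,k`, and
`c_{n,k} r^{1-n} (r^{n-k}(u')^k)' = λ r^σ (1-u)^q` on `(0,1)`. -/
def IsRadialSol (n k : ℕ) (q σ lam : ℝ) (u : ℝ → ℝ) : Prop :=
  ContDiffOn ℝ 2 u (Ioo 0 1) ∧ ContDiffOn ℝ 1 u (Icc 0 1) ∧
  deriv u 0 = 0 ∧ u 1 = 0 ∧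
  (∀ r ∈ Ioo (0:ℝ) 1, u r < 0) ∧
  (∀ i : ℕ, 1 ≤ i → i ≤ k →
    ∀ r ∈ Ioo (0:ℝ) 1, 0 ≤ deriv (fun s => s ^ ((n : ℝ) - i) * (deriv u s) ^ i) r) ∧
  (∀ r ∈ Ioo (0:ℝ) 1,
    cnk n k * r ^ (1 - (n : ℝ)) *
        deriv (fun s => s ^ ((n : ℝ) - k) * (deriv u s) ^ k) r =
      lam * r ^ σ * (1 - u r) ^ q)

/-- A radial subsolution of `(P_λ)`. -/
def IsRadialSubsol (n k : ℕ) (q σ lam : ℝ) (u : ℝ → ℝ) : Prop :=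
  ContDiffOn ℝ 2 u (Ioo 0 1) ∧ ContDiffOn ℝ 1 u (Icc 0 1) ∧
  (∀ i : ℕ, 1 ≤ i → i ≤ k →
    ∀ r ∈ Ioo (0:ℝ) 1, 0 ≤ deriv (fun s => s ^ ((n : ℝ) - i) * (deriv u s) ^ i) r) ∧
  (∀ r ∈ Ioo (0:ℝ) 1,
    lam * r ^ σ * (1 - u r) ^ q ≤
      cnk n k * r ^ (1 - (n : ℝ)) *
        deriv (fun s => s ^ ((n : ℝ) - k) * (deriv u s) ^ k) r) ∧
  u 1 ≤ 0

namespace MaxThm7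

variable {n k : ℕ} {q σ a : ℝ}

def igd (n : ℕ) (q σ a : ℝ) (φ : ℝ → ℝ) (t : ℝ) : ℝ :=
  a * t ^ ((n : ℝ) - 1 + σ) * (1 - φ t) ^ q

def Iin (n : ℕ) (q σ a : ℝ) (φ : ℝ → ℝ) (r : ℝ) : ℝ :=
  ∫ t in (0:ℝ)..r, igd n q σ a φ t

def hfn (n k : ℕ) (q σ a : ℝ) (φ : ℝ → ℝ) (s : ℝ) : ℝ :=
  if 0 < s then (s ^ ((k : ℝ) - n) * Iin n q σ a φ s) ^ ((k : ℝ)⁻¹) else 0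

def Top (n k : ℕ) (q σ a : ℝ) (φ : ℝ → ℝ) (r : ℝ) : ℝ :=
  ∫ s in (1:ℝ)..r, hfn n k q σ a φ s

def Adm (φ : ℝ → ℝ) : Prop :=
  Measurable φ ∧ (∀ t ∈ Icc (0:ℝ) 1, φ t ≤ 0) ∧
    ∀ R : ℝ, 0 < R → ∃ C : ℝ, ∀ t ∈ Icc (-R) R, |φ t| ≤ C

lemma adm_of_continuous {φ : ℝ → ℝ} (hc : Continuous φ)
    (h0 : ∀ t ∈ Icc (0:ℝ) 1, φ t ≤ 0) : Adm φ := by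
  refine ⟨hc.measurable, h0, fun R _ => ?_⟩
  obtain ⟨C, hC⟩ := (isCompact_Icc (a := -R) (b := R)).exists_bound_of_continuousOn
    (hc.continuousOn (s := Icc (-R) R))
  exact ⟨C, fun t ht => by simpa using hC t ht⟩

lemma igd_measurable {φ : ℝ → ℝ} (hφ : Measurable φ) :
    Measurable (igd n q σ a φ) := by
  unfold igd; fun_prop

lemma contF (hq : 0 < q) : Continuous (fun x : ℝ => (1 - x) ^ q) := by
  have : Continuous fun y : ℝ => y ^ q := by
    rw [continuous_iff_continuousAt]
    exact fun x => Real.continuousAt_rpow_const x q (Or.inr hq.le)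
  exact this.comp (continuous_const.sub continuous_id)

lemma contPow (c : ℝ) (hc : 0 ≤ c) : Continuous (fun y : ℝ => y ^ c) := by
  rw [continuous_iff_continuousAt]
  exact fun x => Real.continuousAt_rpow_const x c (Or.inr hc)

lemma intInt_of_bdd_meas {f : ℝ → ℝ} (hf : Measurable f) {b c C : ℝ}
    (hC : ∀ t ∈ Icc b c, |f t| ≤ C) (hbc : b ≤ c) :
    IntervalIntegrable f volume b c := by
  rw [intervalIntegrable_iff_integrableOn_Ioc_of_le hbc]
  refine ⟨hf.aestronglyMeasurable.restrict, ?_⟩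
  apply MeasureTheory.HasFiniteIntegral.restrict_of_bounded (C := C)
    (measure_Ioc_lt_top)
  filter_upwards [MeasureTheory.ae_restrict_mem measurableSet_Ioc] with t ht
  simpa [Real.norm_eq_abs] using hC t (Ioc_subset_Icc_self ht)

lemma F_le_F (hq : 0 < q) {x y : ℝ} (hxy : x ≤ y) (hy : y ≤ 1) :
    (1 - y) ^ q ≤ (1 - x) ^ q :=
  Real.rpow_le_rpow (by linarith) (by linarith) hq.le

lemma F_abs_le (hq : 0 < q) {x C : ℝ} (hx : |x| ≤ C) :
    |(1 - x) ^ q| ≤ (1 + C) ^ q := by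
  have h1 : |1 - x| ≤ 1 + C := by
    calc |1 - x| ≤ |1| + |x| := abs_sub _ _
      _ ≤ 1 + C := by simp only [abs_one]; linarith
  calc |(1 - x) ^ q| ≤ |1 - x| ^ q := Real.abs_rpow_le_abs_rpow _ _
    _ ≤ (1 + C) ^ q := Real.rpow_le_rpow (abs_nonneg _) h1 hq.le

lemma igd_intervalIntegrable (hn1 : 1 ≤ n) (hq : 0 < q) (hσ : 0 ≤ σ) {φ : ℝ → ℝ}
    (hφ : Adm φ) (b c : ℝ) : IntervalIntegrable (igd n q σ a φ) volume b c := by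
  have he : (0:ℝ) ≤ (n : ℝ) - 1 + σ := by
    have : (1:ℝ) ≤ (n:ℝ) := by exact_mod_cast hn1
    linarith
  have key : ∀ b c : ℝ, b ≤ c → IntervalIntegrable (igd n q σ a φ) volume b c := by
    intro b c hbc
    set R := max |b| |c| + 1 with hR
    have hRpos : 0 < R := by positivity
    obtain ⟨C, hC⟩ := hφ.2.2 R hRpos
    have hsub : Icc b c ⊆ Icc (-R) R := by
      apply Icc_subset_Icc
      · have := neg_abs_le b; have := le_max_left |b| |c|; simp only [hR]; linarith
      · have := le_abs_self c; have := le_max_right |b| |c|; simp only [hR]; linarith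
    refine intInt_of_bdd_meas (igd_measurable hφ.1)
      (C := |a| * R ^ ((n:ℝ) - 1 + σ) * (1 + C) ^ q) (fun t ht => ?_) hbc
    have htR : |t| ≤ R := abs_le.2 ⟨(hsub ht).1, (hsub ht).2⟩
    have h1 : |t ^ ((n : ℝ) - 1 + σ)| ≤ R ^ ((n:ℝ) - 1 + σ) := by
      calc |t ^ ((n : ℝ) - 1 + σ)| ≤ |t| ^ ((n:ℝ) - 1 + σ) := Real.abs_rpow_le_abs_rpow _ _
        _ ≤ R ^ ((n:ℝ) - 1 + σ) := Real.rpow_le_rpow (abs_nonneg _) htR he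
    have h2 : |(1 - φ t) ^ q| ≤ (1 + C) ^ q := F_abs_le hq (hC t (hsub ht))
    calc |igd n q σ a φ t| = |a| * |t ^ ((n : ℝ) - 1 + σ)| * |(1 - φ t) ^ q| := by
          unfold igd; rw [abs_mul, abs_mul]
      _ ≤ |a| * R ^ ((n:ℝ) - 1 + σ) * (1 + C) ^ q := by
          apply mul_le_mul (mul_le_mul le_rfl h1 (abs_nonneg _) (abs_nonneg _)) h2 (abs_nonneg _)
          positivity
  rcases le_total b c with h | h
  · exact key b c h
  · exact (key c b h).symm

lemma Iin_continuous (hn1 : 1 ≤ n) (hq : 0 < q) (hσ : 0 ≤ σ) {φ : ℝ → ℝ} (hφ : Adm φ) :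
    Continuous (Iin n q σ a φ) :=
  intervalIntegral.continuous_primitive (igd_intervalIntegrable hn1 hq hσ hφ) 0

lemma igd_nonneg (ha : 0 ≤ a) (hq : 0 < q) {φ : ℝ → ℝ}
    (hφ0 : ∀ t ∈ Icc (0:ℝ) 1, φ t ≤ 0) {t : ℝ} (ht : t ∈ Icc (0:ℝ) 1) :
    0 ≤ igd n q σ a φ t := by
  have h1 : (0:ℝ) ≤ 1 - φ t := by linarith [hφ0 t ht]
  exact mul_nonneg (mul_nonneg ha (Real.rpow_nonneg ht.1 _)) (Real.rpow_nonneg h1 _)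

lemma igd_pos (ha : 0 < a) (hq : 0 < q) {φ : ℝ → ℝ}
    (hφ0 : ∀ t ∈ Icc (0:ℝ) 1, φ t ≤ 0) {t : ℝ} (ht : t ∈ Ioc (0:ℝ) 1) :
    0 < igd n q σ a φ t := by
  have h1 : (0:ℝ) < 1 - φ t := by linarith [hφ0 t ⟨ht.1.le, ht.2⟩]
  exact mul_pos (mul_pos ha (Real.rpow_pos_of_pos ht.1 _)) (Real.rpow_pos_of_pos h1 _)

lemma Iin_nonneg (ha : 0 ≤ a) (hq : 0 < q) {φ : ℝ → ℝ}
    (hφ0 : ∀ t ∈ Icc (0:ℝ) 1, φ t ≤ 0) {r : ℝ} (hr : r ∈ Icc (0:ℝ) 1) :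
    0 ≤ Iin n q σ a φ r := by
  apply intervalIntegral.integral_nonneg hr.1
  intro t ht
  exact igd_nonneg ha hq hφ0 ⟨ht.1, le_trans ht.2 hr.2⟩

lemma Iin_pos (hn1 : 1 ≤ n) (ha : 0 < a) (hq : 0 < q) (hσ : 0 ≤ σ) {φ : ℝ → ℝ}
    (hφ : Adm φ) {r : ℝ} (hr : r ∈ Ioc (0:ℝ) 1) :
    0 < Iin n q σ a φ r := by
  apply intervalIntegral.intervalIntegral_pos_of_pos_on
    (igd_intervalIntegrable hn1 hq hσ hφ 0 r) _ hr.1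
  intro t ht
  exact igd_pos ha hq hφ.2.1 ⟨ht.1, le_trans ht.2.le hr.2⟩

end MaxThm7

namespace MaxThm7
variable {n k : ℕ} {q σ a : ℝ}

/-- key growth bound for `Iin` near 0. -/
lemma Iin_le_bound (hn1 : 1 ≤ n) (ha : 0 < a) (hq : 0 < q) (hσ : 0 ≤ σ) {φ : ℝ → ℝ}
    (hφ : Adm φ) {C : ℝ} (hC : ∀ t ∈ Icc (0:ℝ) 1, |φ t| ≤ C) {r : ℝ}
    (hr : r ∈ Icc (0:ℝ) 1) :
    Iin n q σ a φ r ≤ (a * (1 + C) ^ q / ((n:ℝ) + σ)) * r ^ ((n:ℝ) + σ) := by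
  have hn1' : (1:ℝ) ≤ (n:ℝ) := by exact_mod_cast hn1
  have he : (-1:ℝ) < (n : ℝ) - 1 + σ := by linarith
  have step1 : Iin n q σ a φ r ≤ ∫ t in (0:ℝ)..r, a * (1 + C) ^ q * t ^ ((n:ℝ) - 1 + σ) := by
    apply intervalIntegral.integral_mono_on hr.1 (igd_intervalIntegrable hn1 hq hσ hφ 0 r)
    · apply IntervalIntegrable.const_mul
      apply intervalIntegral.intervalIntegrable_rpow (Or.inl (by linarith : (0:ℝ) ≤ (n:ℝ) - 1 + σ))
    · intro t ht
      have ht' : t ∈ Icc (0:ℝ) 1 := ⟨ht.1, le_trans ht.2 hr.2⟩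
      have h2 : (1 - φ t) ^ q ≤ (1 + C) ^ q := by
        apply Real.rpow_le_rpow (by linarith [hφ.2.1 t ht']) _ hq.le
        have := abs_le.1 (hC t ht')
        linarith [this.1]
      calc igd n q σ a φ t = a * t ^ ((n:ℝ) - 1 + σ) * (1 - φ t) ^ q := rfl
        _ ≤ a * t ^ ((n:ℝ) - 1 + σ) * (1 + C) ^ q := by
            apply mul_le_mul_of_nonneg_left h2
            exact mul_nonneg ha.le (Real.rpow_nonneg ht.1 _)
        _ = a * (1 + C) ^ q * t ^ ((n:ℝ) - 1 + σ) := by ring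
  have step2 : ∫ t in (0:ℝ)..r, a * (1 + C) ^ q * t ^ ((n:ℝ) - 1 + σ)
      = (a * (1 + C) ^ q / ((n:ℝ) + σ)) * r ^ ((n:ℝ) + σ) := by
    rw [intervalIntegral.integral_const_mul, integral_rpow (Or.inl he),
      Real.zero_rpow (by linarith : (n:ℝ) - 1 + σ + 1 ≠ 0)]
    have : (n:ℝ) - 1 + σ + 1 = (n:ℝ) + σ := by ring
    rw [this]; ring
  linarith [step1, step2.le]

/-- monotone comparison of `Iin` in `φ`. -/
lemma Iin_anti (hn1 : 1 ≤ n) (ha : 0 < a) (hq : 0 < q) (hσ : 0 ≤ σ) {φ ψ : ℝ → ℝ}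
    (hφ : Adm φ) (hψ : Adm ψ) (hle : ∀ t ∈ Icc (0:ℝ) 1, φ t ≤ ψ t) {r : ℝ}
    (hr : r ∈ Icc (0:ℝ) 1) :
    Iin n q σ a ψ r ≤ Iin n q σ a φ r := by
  apply intervalIntegral.integral_mono_on hr.1 (igd_intervalIntegrable hn1 hq hσ hψ 0 r)
    (igd_intervalIntegrable hn1 hq hσ hφ 0 r)
  intro t ht
  have ht' : t ∈ Icc (0:ℝ) 1 := ⟨ht.1, le_trans ht.2 hr.2⟩
  have h2 : (1 - ψ t) ^ q ≤ (1 - φ t) ^ q := F_le_F hq (hle t ht') (by linarith [hψ.2.1 t ht'])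
  apply mul_le_mul_of_nonneg_left h2
  exact mul_nonneg ha.le (Real.rpow_nonneg ht.1 _)

lemma igd_continuousAt (hn1 : 1 ≤ n) (hq : 0 < q) (hσ : 0 ≤ σ) {φ : ℝ → ℝ} {t : ℝ}
    (hφ : ContinuousAt φ t) : ContinuousAt (igd n q σ a φ) t := by
  have he : (0:ℝ) ≤ (n : ℝ) - 1 + σ := by
    have : (1:ℝ) ≤ (n:ℝ) := by exact_mod_cast hn1
    linarith
  exact (continuousAt_const.mul ((contPow _ he).continuousAt)).mul
    (((contF hq).continuousAt).comp hφ)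

lemma Iin_hasDerivAt (hn1 : 1 ≤ n) (hq : 0 < q) (hσ : 0 ≤ σ) {φ : ℝ → ℝ}
    (hφ : Adm φ) {r : ℝ} (hr : ContinuousAt (igd n q σ a φ) r) :
    HasDerivAt (Iin n q σ a φ) (igd n q σ a φ r) r :=
  intervalIntegral.integral_hasDerivAt_right (igd_intervalIntegrable hn1 hq hσ hφ 0 r)
    ((igd_measurable hφ.1).stronglyMeasurable.stronglyMeasurableAtFilter) hr

lemma hfn_nonneg (ha : 0 ≤ a) (hq : 0 < q) {φ : ℝ → ℝ}
    (hφ0 : ∀ t ∈ Icc (0:ℝ) 1, φ t ≤ 0) {s : ℝ} (hs : s ≤ 1) :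
    0 ≤ hfn n k q σ a φ s := by
  unfold hfn
  split_ifs with h
  · apply Real.rpow_nonneg
    exact mul_nonneg (Real.rpow_nonneg h.le _) (Iin_nonneg ha hq hφ0 ⟨h.le, hs⟩)
  · exact le_refl _

lemma hfn_pos (hn1 : 1 ≤ n) (ha : 0 < a) (hq : 0 < q) (hσ : 0 ≤ σ) {φ : ℝ → ℝ}
    (hφ : Adm φ) {s : ℝ} (hs : s ∈ Ioc (0:ℝ) 1) :
    0 < hfn n k q σ a φ s := by
  unfold hfn
  rw [if_pos hs.1]
  apply Real.rpow_pos_of_pos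
  exact mul_pos (Real.rpow_pos_of_pos hs.1 _) (Iin_pos hn1 ha hq hσ hφ hs)

lemma hfn_pow (hk : 1 ≤ k) (ha : 0 ≤ a) (hq : 0 < q) {φ : ℝ → ℝ}
    (hφ0 : ∀ t ∈ Icc (0:ℝ) 1, φ t ≤ 0) {s : ℝ} (hs : s ∈ Ioc (0:ℝ) 1) :
    (hfn n k q σ a φ s) ^ k = s ^ ((k:ℝ) - n) * Iin n q σ a φ s := by
  have hbase : 0 ≤ s ^ ((k:ℝ) - n) * Iin n q σ a φ s :=
    mul_nonneg (Real.rpow_nonneg hs.1.le _) (Iin_nonneg ha hq hφ0 ⟨hs.1.le, hs.2⟩)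
  have hk0 : ((k:ℝ)) ≠ 0 := by positivity
  unfold hfn
  rw [if_pos hs.1, ← Real.rpow_natCast (_ ^ ((k:ℝ)⁻¹)) k, ← Real.rpow_mul hbase,
    inv_mul_cancel₀ hk0, Real.rpow_one]

end MaxThm7

namespace MaxThm7
variable {n k : ℕ} {q σ a : ℝ}

/-- uniform bound for `hfn` on `[0,1]`, given a bound for `φ`. -/
lemma hfn_le_bound (hn1 : 1 ≤ n) (hk : 1 ≤ k) (hkn : k < n) (ha : 0 < a) (hq : 0 < q)
    (hσ : 0 ≤ σ) {φ : ℝ → ℝ} (hφ : Adm φ) {C : ℝ}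
    (hC : ∀ t ∈ Icc (0:ℝ) 1, |φ t| ≤ C) {s : ℝ} (hs : s ∈ Icc (0:ℝ) 1) :
    hfn n k q σ a φ s ≤ (a * (1 + C) ^ q / ((n:ℝ) + σ)) ^ ((k:ℝ)⁻¹) *
      s ^ (((k:ℝ) + σ) * ((k:ℝ)⁻¹)) := by
  set M := a * (1 + C) ^ q / ((n:ℝ) + σ) with hM
  have hC0 : 0 ≤ C := le_trans (abs_nonneg _) (hC 0 (by simp))
  have hn0 : (0:ℝ) < (n:ℝ) + σ := by
    have : (1:ℝ) ≤ (n:ℝ) := by exact_mod_cast hn1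
    linarith
  have hM0 : 0 ≤ M := by
    apply div_nonneg _ hn0.le
    exact mul_nonneg ha.le (Real.rpow_nonneg (by linarith) _)
  rcases eq_or_lt_of_le hs.1 with h0 | h0
  · unfold hfn
    rw [if_neg (by rw [← h0]; exact lt_irrefl 0)]
    positivity
  · unfold hfn
    rw [if_pos h0]
    have hIb := Iin_le_bound hn1 ha hq hσ hφ hC hs
    have hb1 : s ^ ((k:ℝ) - n) * Iin n q σ a φ s ≤ M * s ^ (((k:ℝ) + σ)) := by
      calc s ^ ((k:ℝ) - n) * Iin n q σ a φ s ≤ s ^ ((k:ℝ) - n) * (M * s ^ ((n:ℝ) + σ)) := by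
            apply mul_le_mul_of_nonneg_left hIb (Real.rpow_nonneg h0.le _)
        _ = M * (s ^ ((k:ℝ) - n) * s ^ ((n:ℝ) + σ)) := by ring
        _ = M * s ^ (((k:ℝ) + σ)) := by
            rw [← Real.rpow_add h0]
            congr 1
            ring
    have hbase0 : 0 ≤ s ^ ((k:ℝ) - n) * Iin n q σ a φ s :=
      mul_nonneg (Real.rpow_nonneg h0.le _) (Iin_nonneg ha.le hq hφ.2.1 hs)
    calc (s ^ ((k:ℝ) - n) * Iin n q σ a φ s) ^ ((k:ℝ)⁻¹)
        ≤ (M * s ^ (((k:ℝ) + σ))) ^ ((k:ℝ)⁻¹) := Real.rpow_le_rpow hbase0 hb1 (by positivity)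
      _ = M ^ ((k:ℝ)⁻¹) * (s ^ (((k:ℝ) + σ))) ^ ((k:ℝ)⁻¹) :=
          Real.mul_rpow hM0 (Real.rpow_nonneg h0.le _)
      _ = M ^ ((k:ℝ)⁻¹) * s ^ (((k:ℝ) + σ) * ((k:ℝ)⁻¹)) := by
          rw [← Real.rpow_mul h0.le]

lemma hfn_continuous (hn1 : 1 ≤ n) (hk : 1 ≤ k) (hkn : k < n) (ha : 0 < a) (hq : 0 < q)
    (hσ : 0 ≤ σ) {φ : ℝ → ℝ} (hφ : Adm φ) : Continuous (hfn n k q σ a φ) := by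
  rw [continuous_iff_continuousAt]
  intro s
  rcases lt_trichotomy s 0 with hs | hs | hs
  · -- negative: locally constant 0
    apply ContinuousAt.congr (continuousAt_const (y := (0:ℝ)))
    filter_upwards [Iio_mem_nhds hs] with t ht
    unfold hfn
    rw [if_neg (by exact not_lt.2 (le_of_lt ht))]
  · -- at 0 : squeeze
    subst hs
    obtain ⟨C, hC⟩ := hφ.2.2 1 one_pos
    have hC' : ∀ t ∈ Icc (0:ℝ) 1, |φ t| ≤ C := fun t ht => hC t ⟨by linarith [ht.1], ht.2⟩
    have h0 : hfn n k q σ a φ 0 = 0 := by unfold hfn; rw [if_neg (lt_irrefl 0)]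
    unfold ContinuousAt
    rw [h0]
    have hsup : Tendsto (hfn n k q σ a φ) (nhdsWithin 0 (Iic 0) ⊔ nhdsWithin 0 (Ici 0)) (nhds 0) := by
      rw [Filter.tendsto_sup]
      constructor
      · apply Tendsto.congr' _ tendsto_const_nhds
        filter_upwards [self_mem_nhdsWithin] with t (ht : t ≤ 0)
        unfold hfn
        rw [if_neg (not_lt.2 ht)]
      · apply squeeze_zero'
        · filter_upwards [Icc_mem_nhdsGE_of_mem (by simp : (0:ℝ) ∈ Ico (0:ℝ) 1)] with t ht
          exact hfn_nonneg ha.le hq hφ.2.1 ht.2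
        · filter_upwards [Icc_mem_nhdsGE_of_mem (by simp : (0:ℝ) ∈ Ico (0:ℝ) 1)] with t ht
          exact hfn_le_bound hn1 hk hkn ha hq hσ hφ hC' ht
        · have hc : Continuous fun t : ℝ =>
              (a * (1 + C) ^ q / ((n:ℝ) + σ)) ^ ((k:ℝ)⁻¹) * t ^ (((k:ℝ) + σ) * ((k:ℝ)⁻¹)) :=
            continuous_const.mul (contPow _ (by positivity))
          have := (hc.tendsto 0).mono_left (nhdsWithin_le_nhds (s := Ici (0:ℝ)))
          simpa [Real.zero_rpow (by positivity : ((k:ℝ) + σ) * ((k:ℝ)⁻¹) ≠ 0)] using this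
    exact (nhdsLE_sup_nhdsGE (0:ℝ)) ▸ hsup
  · -- positive
    have hform : ∀ t ∈ Ioi (0:ℝ), hfn n k q σ a φ t =
        (t ^ ((k:ℝ) - n) * Iin n q σ a φ t) ^ ((k:ℝ)⁻¹) := by
      intro t ht
      unfold hfn
      rw [if_pos (mem_Ioi.mp ht)]
    have hca : ContinuousAt (fun t => (t ^ ((k:ℝ) - n) * Iin n q σ a φ t) ^ ((k:ℝ)⁻¹)) s := by
      apply ContinuousAt.rpow_const _ (Or.inr (by positivity))
      exact ((Real.continuousAt_rpow_const s _ (Or.inl hs.ne')).mul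
        ((Iin_continuous hn1 hq hσ hφ).continuousAt))
    apply ContinuousAt.congr hca
    filter_upwards [Ioi_mem_nhds hs] with t ht
    exact (hform t ht).symm

end MaxThm7

namespace MaxThm7
variable {n k : ℕ} {q σ a : ℝ}

lemma Top_hasDerivAt (hn1 : 1 ≤ n) (hk : 1 ≤ k) (hkn : k < n) (ha : 0 < a) (hq : 0 < q)
    (hσ : 0 ≤ σ) {φ : ℝ → ℝ} (hφ : Adm φ) (r : ℝ) :
    HasDerivAt (Top n k q σ a φ) (hfn n k q σ a φ r) r := by
  have hc := hfn_continuous hn1 hk hkn ha hq hσ hφ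
  exact intervalIntegral.integral_hasDerivAt_right (hc.intervalIntegrable 1 r)
    (hc.stronglyMeasurable.stronglyMeasurableAtFilter) hc.continuousAt

lemma Top_deriv (hn1 : 1 ≤ n) (hk : 1 ≤ k) (hkn : k < n) (ha : 0 < a) (hq : 0 < q)
    (hσ : 0 ≤ σ) {φ : ℝ → ℝ} (hφ : Adm φ) :
    deriv (Top n k q σ a φ) = hfn n k q σ a φ := by
  funext r
  exact (Top_hasDerivAt hn1 hk hkn ha hq hσ hφ r).deriv

lemma Top_one : Top n k q σ a φ 1 = 0 := by
  unfold Top; simp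

lemma Top_eq_neg (r : ℝ) : Top n k q σ a φ r = -∫ s in r..(1:ℝ), hfn n k q σ a φ s := by
  unfold Top; rw [intervalIntegral.integral_symm]

lemma Top_nonpos (hn1 : 1 ≤ n) (hk : 1 ≤ k) (hkn : k < n) (ha : 0 < a) (hq : 0 < q)
    (hσ : 0 ≤ σ) {φ : ℝ → ℝ} (hφ : Adm φ) {r : ℝ} (hr : r ∈ Icc (0:ℝ) 1) :
    Top n k q σ a φ r ≤ 0 := by
  rw [Top_eq_neg, neg_nonpos]
  apply intervalIntegral.integral_nonneg hr.2
  intro s hs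
  exact hfn_nonneg ha.le hq hφ.2.1 hs.2

lemma Top_neg (hn1 : 1 ≤ n) (hk : 1 ≤ k) (hkn : k < n) (ha : 0 < a) (hq : 0 < q)
    (hσ : 0 ≤ σ) {φ : ℝ → ℝ} (hφ : Adm φ) {r : ℝ} (hr : r ∈ Ioo (0:ℝ) 1) :
    Top n k q σ a φ r < 0 := by
  rw [Top_eq_neg, neg_lt, neg_zero]
  apply intervalIntegral.intervalIntegral_pos_of_pos_on
    ((hfn_continuous hn1 hk hkn ha hq hσ hφ).intervalIntegrable r 1) _ hr.2
  intro s hs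
  exact hfn_pos hn1 ha hq hσ hφ ⟨lt_trans hr.1 hs.1, hs.2.le⟩

lemma Top_continuous (hn1 : 1 ≤ n) (hk : 1 ≤ k) (hkn : k < n) (ha : 0 < a) (hq : 0 < q)
    (hσ : 0 ≤ σ) {φ : ℝ → ℝ} (hφ : Adm φ) : Continuous (Top n k q σ a φ) := by
  rw [continuous_iff_continuousAt]
  exact fun r => (Top_hasDerivAt hn1 hk hkn ha hq hσ hφ r).continuousAt

lemma Top_adm (hn1 : 1 ≤ n) (hk : 1 ≤ k) (hkn : k < n) (ha : 0 < a) (hq : 0 < q)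
    (hσ : 0 ≤ σ) {φ : ℝ → ℝ} (hφ : Adm φ) : Adm (Top n k q σ a φ) :=
  adm_of_continuous (Top_continuous hn1 hk hkn ha hq hσ hφ)
    (fun _ ht => Top_nonpos hn1 hk hkn ha hq hσ hφ ht)

/-- monotonicity of `Top` in `φ`. -/
lemma Top_mono (hn1 : 1 ≤ n) (hk : 1 ≤ k) (hkn : k < n) (ha : 0 < a) (hq : 0 < q)
    (hσ : 0 ≤ σ) {φ ψ : ℝ → ℝ} (hφ : Adm φ) (hψ : Adm ψ)
    (hle : ∀ t ∈ Icc (0:ℝ) 1, φ t ≤ ψ t) {r : ℝ} (hr : r ∈ Icc (0:ℝ) 1) :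
    Top n k q σ a φ r ≤ Top n k q σ a ψ r := by
  rw [Top_eq_neg, Top_eq_neg, neg_le_neg_iff]
  apply intervalIntegral.integral_mono_on hr.2
    ((hfn_continuous hn1 hk hkn ha hq hσ hψ).intervalIntegrable r 1)
    ((hfn_continuous hn1 hk hkn ha hq hσ hφ).intervalIntegrable r 1)
  intro s hs
  have hs' : s ∈ Icc (0:ℝ) 1 := ⟨le_trans hr.1 hs.1, hs.2⟩
  rcases eq_or_lt_of_le hs'.1 with h0 | h0
  · have hns : ¬ 0 < s := by rw [← h0]; exact lt_irrefl 0
    unfold hfn; rw [if_neg hns, if_neg hns]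
  · unfold hfn
    rw [if_pos h0, if_pos h0]
    apply Real.rpow_le_rpow
    · exact mul_nonneg (Real.rpow_nonneg h0.le _) (Iin_nonneg ha.le hq hψ.2.1 hs')
    · exact mul_le_mul_of_nonneg_left (Iin_anti hn1 ha hq hσ hφ hψ hle hs')
        (Real.rpow_nonneg h0.le _)
    · positivity

end MaxThm7

namespace MaxThm7
variable {n k : ℕ} {q σ a lam : ℝ}

lemma cnk_pos (hk : 1 ≤ k) (hn : 2 * k < n) : 0 < cnk n k :=
  div_pos (Nat.cast_pos.2 (Nat.choose_pos (by omega))) (Nat.cast_pos.2 (by omega))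

/-- generic: monotone on `Ioo 0 1` with limit `L` at `0⁺` is `≥ L`. -/
lemma le_of_monotoneOn_tendsto {f : ℝ → ℝ} {L : ℝ} (hm : MonotoneOn f (Ioo (0:ℝ) 1))
    (hl : Tendsto f (nhdsWithin 0 (Ioi 0)) (nhds L)) {s : ℝ} (hs : s ∈ Ioo (0:ℝ) 1) :
    L ≤ f s := by
  apply le_of_tendsto hl
  filter_upwards [Ioo_mem_nhdsGT_of_mem (⟨le_refl 0, hs.1⟩ : (0:ℝ) ∈ Ico (0:ℝ) s)] with t ht
  exact hm ⟨ht.1, lt_trans ht.2 hs.2⟩ hs (le_of_lt ht.2)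

section Subsol

variable {v : ℝ → ℝ}

lemma subsol_deriv_contOn (hv : IsRadialSubsol n k q σ lam v) :
    ContDiffOn ℝ 1 (deriv v) (Ioo (0:ℝ) 1) := by
  have h2 : ContDiffOn ℝ (1 + 1 : ℕ) v (Ioo (0:ℝ) 1) := by exact_mod_cast hv.1
  exact ((contDiffOn_succ_iff_deriv_of_isOpen isOpen_Ioo).mp h2).2.2

lemma subsol_deriv_bound (hv : IsRadialSubsol n k q σ lam v) :
    ∃ C : ℝ, 0 ≤ C ∧ ∀ x ∈ Ioo (0:ℝ) 1, |deriv v x| ≤ C := by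
  have hd1 : ContinuousOn (derivWithin v (Icc (0:ℝ) 1)) (Icc (0:ℝ) 1) :=
    hv.2.1.continuousOn_derivWithin (uniqueDiffOn_Icc zero_lt_one) (le_refl _)
  obtain ⟨C, hC⟩ := isCompact_Icc.exists_bound_of_continuousOn hd1
  refine ⟨max C 0, le_max_right _ _, fun x hx => ?_⟩
  have heq : derivWithin v (Icc (0:ℝ) 1) x = deriv v x :=
    derivWithin_of_mem_nhds (Icc_mem_nhds hx.1 hx.2)
  rw [← heq]
  exact le_trans (by simpa using hC x ⟨hx.1.le, hx.2.le⟩) (le_max_left _ _)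

lemma subsol_deriv_nonneg (hk : 1 ≤ k) (hn : 2 * k < n)
    (hv : IsRadialSubsol n k q σ lam v) :
    ∀ s ∈ Ioo (0:ℝ) 1, 0 ≤ deriv v s := by
  obtain ⟨C, hC0, hC⟩ := subsol_deriv_bound hv
  set G : ℝ → ℝ := fun s => s ^ ((n : ℝ) - (1:ℕ)) * (deriv v s) ^ (1:ℕ) with hG
  have hn1R : (1:ℝ) < (n:ℝ) := by exact_mod_cast (by omega : 1 < n)
  have hGdiff : DifferentiableOn ℝ G (Ioo (0:ℝ) 1) := by
    intro x hx
    apply DifferentiableWithinAt.mul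
    · exact (Real.hasDerivAt_rpow_const (p := (n:ℝ) - (1:ℕ)) (Or.inl hx.1.ne')).differentiableAt.differentiableWithinAt
    · exact (((subsol_deriv_contOn hv).differentiableOn one_ne_zero) x hx).pow 1
  have hGmono : MonotoneOn G (Ioo (0:ℝ) 1) := by
    apply monotoneOn_of_deriv_nonneg (convex_Ioo 0 1) hGdiff.continuousOn
    · rw [interior_Ioo]; exact hGdiff
    · rw [interior_Ioo]
      intro x hx
      exact hv.2.2.1 1 le_rfl hk x hx
  have hGtend : Tendsto G (nhdsWithin 0 (Ioi 0)) (nhds 0) := by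
    rw [tendsto_zero_iff_abs_tendsto_zero]
    apply squeeze_zero' (g := fun t => C * t ^ ((n:ℝ) - (1:ℕ)))
    · filter_upwards with t; simp [abs_nonneg]
    · filter_upwards [Ioo_mem_nhdsGT_of_mem (⟨le_refl 0, one_pos⟩ : (0:ℝ) ∈ Ico (0:ℝ) 1)] with t ht
      have habs : |G t| = t ^ ((n:ℝ) - (1:ℕ)) * |deriv v t| := by
        rw [hG]; simp only [pow_one, abs_mul]
        rw [abs_of_nonneg (Real.rpow_nonneg ht.1.le _)]
      simp only [Function.comp_apply]
      rw [habs]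
      calc t ^ ((n:ℝ) - (1:ℕ)) * |deriv v t| ≤ t ^ ((n:ℝ) - (1:ℕ)) * C :=
            mul_le_mul_of_nonneg_left (hC t ht) (Real.rpow_nonneg ht.1.le _)
        _ = C * t ^ ((n:ℝ) - (1:ℕ)) := by ring
    · have hc : Continuous (fun t : ℝ => C * t ^ ((n:ℝ) - (1:ℕ))) :=
        continuous_const.mul (contPow _ (by push_cast; linarith))
      have h0' := (hc.tendsto 0).mono_left (nhdsWithin_le_nhds (s := Ioi (0:ℝ)))
      have hz : (0:ℝ) ^ ((n:ℝ) - (1:ℕ)) = 0 :=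
        Real.zero_rpow (by push_cast; intro hcon; linarith)
      rw [hz, mul_zero] at h0'
      exact h0'
  intro s hs
  have h0 : 0 ≤ G s := le_of_monotoneOn_tendsto hGmono hGtend hs
  have hpos : 0 < s ^ ((n:ℝ) - (1:ℕ)) := Real.rpow_pos_of_pos hs.1 _
  have := (mul_nonneg_iff_of_pos_left hpos).mp (by simpa [hG, pow_one] using h0)
  exact this

lemma subsol_monotoneOn (hk : 1 ≤ k) (hn : 2 * k < n)
    (hv : IsRadialSubsol n k q σ lam v) : MonotoneOn v (Icc (0:ℝ) 1) := by
  apply monotoneOn_of_deriv_nonneg (convex_Icc 0 1) hv.2.1.continuousOn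
  · rw [interior_Icc]; exact hv.1.differentiableOn (by norm_num)
  · rw [interior_Icc]; exact subsol_deriv_nonneg hk hn hv

lemma subsol_nonpos (hk : 1 ≤ k) (hn : 2 * k < n)
    (hv : IsRadialSubsol n k q σ lam v) : ∀ t ∈ Icc (0:ℝ) 1, v t ≤ 0 := by
  intro t ht
  exact le_trans (subsol_monotoneOn hk hn hv ht (right_mem_Icc.2 zero_le_one) ht.2) hv.2.2.2.2

end Subsol
end MaxThm7

namespace MaxThm7
variable {n k : ℕ} {q σ lam : ℝ} {v : ℝ → ℝ}

/-- clamp of `v` to `[0,1]`. -/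
def clampF (v : ℝ → ℝ) : ℝ → ℝ := fun t => v (max 0 (min t 1))

lemma clampF_eq (v : ℝ → ℝ) {t : ℝ} (ht : t ∈ Icc (0:ℝ) 1) : clampF v t = v t := by
  unfold clampF
  rw [min_eq_left ht.2, max_eq_right ht.1]

lemma clampF_continuous (hv : ContinuousOn v (Icc (0:ℝ) 1)) : Continuous (clampF v) := by
  apply hv.comp_continuous (continuous_const.max (continuous_id.min continuous_const))
  intro t
  constructor
  · exact le_max_left _ _
  · exact max_le (zero_le_one) (min_le_right _ _)

lemma clampF_adm (hk : 1 ≤ k) (hn : 2 * k < n) (hv : IsRadialSubsol n k q σ lam v) :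
    Adm (clampF v) := by
  apply adm_of_continuous (clampF_continuous hv.2.1.continuousOn)
  intro t ht
  rw [clampF_eq v ht]
  exact subsol_nonpos hk hn hv t ht

/-- key differential inequality in integrated form. -/
lemma subsol_key (hk : 1 ≤ k) (hn : 2 * k < n) (hq : (k:ℝ) < q) (hσ : 0 ≤ σ)
    (hlam : 0 < lam) (hv : IsRadialSubsol n k q σ lam v) :
    ∀ s ∈ Ioo (0:ℝ) 1,
      Iin n q σ (lam / cnk n k) (clampF v) s ≤ s ^ ((n : ℝ) - k) * (deriv v s) ^ k := by
  have hn1 : 1 ≤ n := by omega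
  have hq0 : 0 < q := lt_of_le_of_lt (by positivity) hq
  have hc := cnk_pos hk hn
  have ha : 0 < lam / cnk n k := div_pos hlam hc
  have hVadm := clampF_adm hk hn hv
  obtain ⟨C, hC0, hC⟩ := subsol_deriv_bound hv
  set a := lam / cnk n k with haa
  set Fv : ℝ → ℝ := fun s => s ^ ((n : ℝ) - (k:ℕ)) * (deriv v s) ^ (k:ℕ) with hFv
  set D : ℝ → ℝ := fun s => Fv s - Iin n q σ a (clampF v) s with hD
  have hnkR : (0:ℝ) < (n:ℝ) - (k:ℕ) := by
    push_cast
    have : (k:ℝ) < (n:ℝ) := by exact_mod_cast (by omega : k < n)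
    linarith
  have hFvdiff : DifferentiableOn ℝ Fv (Ioo (0:ℝ) 1) := by
    intro x hx
    apply DifferentiableWithinAt.mul
    · exact (Real.hasDerivAt_rpow_const (p := (n:ℝ) - (k:ℕ))
        (Or.inl hx.1.ne')).differentiableAt.differentiableWithinAt
    · exact (((subsol_deriv_contOn hv).differentiableOn one_ne_zero) x hx).pow k
  have hIinDeriv : ∀ x ∈ Ioo (0:ℝ) 1,
      HasDerivAt (Iin n q σ a (clampF v)) (igd n q σ a (clampF v) x) x := by
    intro x hx
    exact Iin_hasDerivAt hn1 hq0 hσ hVadm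
      (igd_continuousAt hn1 hq0 hσ (clampF_continuous hv.2.1.continuousOn).continuousAt)
  have hDdiff : DifferentiableOn ℝ D (Ioo (0:ℝ) 1) := by
    intro x hx
    exact (hFvdiff x hx).sub ((hIinDeriv x hx).differentiableAt.differentiableWithinAt)
  have hDderiv : ∀ x ∈ Ioo (0:ℝ) 1, 0 ≤ deriv D x := by
    intro x hx
    have hdFv : DifferentiableAt ℝ Fv x := by
      apply DifferentiableAt.mul
      · exact (Real.hasDerivAt_rpow_const (p := (n:ℝ) - (k:ℕ)) (Or.inl hx.1.ne')).differentiableAt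
      · apply DifferentiableAt.pow
        apply ((subsol_deriv_contOn hv).differentiableOn one_ne_zero x hx).differentiableAt
        exact isOpen_Ioo.mem_nhds hx
    have hDx : deriv D x = deriv Fv x - igd n q σ a (clampF v) x := by
      rw [hD]
      rw [deriv_fun_sub hdFv (hIinDeriv x hx).differentiableAt, (hIinDeriv x hx).deriv]
    rw [hDx, sub_nonneg]
    -- use the subsolution inequality
    have hineq := hv.2.2.2.1 x hx
    have hx1n : x ^ ((1:ℝ) - (n:ℝ)) * x ^ ((n:ℝ) - 1) = 1 := by
      rw [← Real.rpow_add hx.1]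
      norm_num
    have hxσ : x ^ σ * x ^ ((n:ℝ) - 1) = x ^ ((n:ℝ) - 1 + σ) := by
      rw [← Real.rpow_add hx.1]
      ring_nf
    have hveq : clampF v x = v x := clampF_eq v ⟨hx.1.le, hx.2.le⟩
    have expand : igd n q σ a (clampF v) x
        = (lam * x ^ σ * (1 - v x) ^ q) * x ^ ((n:ℝ) - 1) / cnk n k := by
      unfold igd
      rw [hveq, haa]
      field_simp
      rw [← hxσ]
      ring
    have expand2 : deriv Fv x
        = (cnk n k * x ^ (1 - (n:ℝ)) * deriv Fv x) * x ^ ((n:ℝ) - 1) / cnk n k := by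
      rw [show (cnk n k * x ^ (1 - (n:ℝ)) * deriv Fv x) * x ^ ((n:ℝ) - 1)
          = (x ^ ((1:ℝ) - (n:ℝ)) * x ^ ((n:ℝ) - 1)) * (cnk n k * deriv Fv x) from by ring,
        hx1n, one_mul, mul_comm, mul_div_assoc, div_self hc.ne', mul_one]
    rw [expand, expand2]
    rw [← hFv] at hineq
    rw [div_le_div_iff_of_pos_right hc]
    exact mul_le_mul_of_nonneg_right hineq (Real.rpow_nonneg hx.1.le _)
  -- monotonicity of D & limit at 0⁺
  have hDmono : MonotoneOn D (Ioo (0:ℝ) 1) := by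
    apply monotoneOn_of_deriv_nonneg (convex_Ioo 0 1) hDdiff.continuousOn
    · rw [interior_Ioo]; exact hDdiff
    · rw [interior_Ioo]; exact hDderiv
  have hFvtend : Tendsto Fv (nhdsWithin 0 (Ioi 0)) (nhds 0) := by
    rw [tendsto_zero_iff_abs_tendsto_zero]
    apply squeeze_zero' (g := fun t => C ^ k * t ^ ((n:ℝ) - (k:ℕ)))
    · filter_upwards with t; simp [abs_nonneg]
    · filter_upwards [Ioo_mem_nhdsGT_of_mem (⟨le_refl 0, one_pos⟩ : (0:ℝ) ∈ Ico (0:ℝ) 1)] with t ht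
      have habs : |Fv t| = t ^ ((n:ℝ) - (k:ℕ)) * |deriv v t| ^ k := by
        rw [hFv]; simp only [abs_mul, abs_pow]
        rw [abs_of_nonneg (Real.rpow_nonneg ht.1.le _)]
      simp only [Function.comp_apply]
      rw [habs]
      calc t ^ ((n:ℝ) - (k:ℕ)) * |deriv v t| ^ k ≤ t ^ ((n:ℝ) - (k:ℕ)) * C ^ k := by
            apply mul_le_mul_of_nonneg_left _ (Real.rpow_nonneg ht.1.le _)
            exact pow_le_pow_left₀ (abs_nonneg _) (hC t ht) k
        _ = C ^ k * t ^ ((n:ℝ) - (k:ℕ)) := by ring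
    · have hcc : Continuous (fun t : ℝ => C ^ k * t ^ ((n:ℝ) - (k:ℕ))) :=
        continuous_const.mul (contPow _ hnkR.le)
      have h0' := (hcc.tendsto 0).mono_left (nhdsWithin_le_nhds (s := Ioi (0:ℝ)))
      have hz : (0:ℝ) ^ ((n:ℝ) - (k:ℕ)) = 0 := Real.zero_rpow hnkR.ne'
      rw [hz, mul_zero] at h0'
      exact h0'
  have hItend : Tendsto (Iin n q σ a (clampF v)) (nhdsWithin 0 (Ioi 0)) (nhds 0) := by
    have hI0 : Iin n q σ a (clampF v) 0 = 0 := intervalIntegral.integral_same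
    have htmp : Tendsto (Iin n q σ a (clampF v)) (nhds 0) (nhds 0) := by
      have h2 := (Iin_continuous (a := a) hn1 hq0 hσ hVadm).tendsto 0
      rwa [hI0] at h2
    exact htmp.mono_left (nhdsWithin_le_nhds (s := Ioi (0:ℝ)))
  have hDtend : Tendsto D (nhdsWithin 0 (Ioi 0)) (nhds 0) := by
    have := hFvtend.sub hItend
    simpa using this
  intro s hs
  have h0 : 0 ≤ D s := le_of_monotoneOn_tendsto hDmono hDtend hs
  rw [hD] at h0
  simp only [sub_nonneg] at h0
  exact h0

end MaxThm7

namespace MaxThm7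
variable {n k : ℕ} {q σ lam : ℝ} {v : ℝ → ℝ}

/-- the central comparison: a subsolution lies below `Top φ` whenever it lies below `φ`. -/
lemma subsol_le_Top (hk : 1 ≤ k) (hn : 2 * k < n) (hq : (k:ℝ) < q) (hσ : 0 ≤ σ)
    (hlam : 0 < lam) (hv : IsRadialSubsol n k q σ lam v) {φ : ℝ → ℝ} (hφ : Adm φ)
    (hle : ∀ t ∈ Icc (0:ℝ) 1, v t ≤ φ t) :
    ∀ r ∈ Icc (0:ℝ) 1, v r ≤ Top n k q σ (lam / cnk n k) φ r := by
  have hn1 : 1 ≤ n := by omega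
  have hkn : k < n := by omega
  have hq0 : 0 < q := lt_of_le_of_lt (by positivity) hq
  have hc := cnk_pos hk hn
  set a := lam / cnk n k with haa
  have ha : 0 < a := div_pos hlam hc
  have hVadm := clampF_adm hk hn hv
  have hdv0 := subsol_deriv_nonneg hk hn hv
  -- pointwise derivative comparison on Ioo
  have hdge : ∀ s ∈ Ioo (0:ℝ) 1, hfn n k q σ a φ s ≤ deriv v s := by
    intro s hs
    have hkey := subsol_key hk hn hq hσ hlam hv s hs
    have hIle : Iin n q σ a φ s ≤ Iin n q σ a (clampF v) s := by
      apply Iin_anti hn1 ha hq0 hσ hVadm hφ _ ⟨hs.1.le, hs.2.le⟩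
      intro t ht
      rw [clampF_eq v ht]
      exact hle t ht
    have hpow : (hfn n k q σ a φ s) ^ k ≤ (deriv v s) ^ k := by
      rw [hfn_pow hk ha.le hq0 hφ.2.1 ⟨hs.1, hs.2.le⟩]
      calc s ^ ((k:ℝ) - n) * Iin n q σ a φ s
          ≤ s ^ ((k:ℝ) - n) * Iin n q σ a (clampF v) s :=
            mul_le_mul_of_nonneg_left hIle (Real.rpow_nonneg hs.1.le _)
        _ ≤ s ^ ((k:ℝ) - n) * (s ^ ((n:ℝ) - k) * (deriv v s) ^ k) :=
            mul_le_mul_of_nonneg_left hkey (Real.rpow_nonneg hs.1.le _)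
        _ = (s ^ ((k:ℝ) - n) * s ^ ((n:ℝ) - k)) * (deriv v s) ^ k := by ring
        _ = (deriv v s) ^ k := by
            rw [← Real.rpow_add hs.1]
            norm_num
    exact le_of_pow_le_pow_left₀ (by omega) (hdv0 s hs) hpow
  -- integrate the comparison on [r, b] for b < 1
  have hmain : ∀ r ∈ Ioo (0:ℝ) 1, v r ≤ Top n k q σ a φ r := by
    intro r hr
    have hIoo : ∀ b ∈ Ico r 1, v r ≤ v b - ∫ s in r..b, hfn n k q σ a φ s := by
      intro b hb
      have hrb : r ≤ b := hb.1
      have hsub : Icc r b ⊆ Ioo (0:ℝ) 1 := fun x hx => ⟨lt_of_lt_of_le hr.1 hx.1,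
        lt_of_le_of_lt hx.2 hb.2⟩
      have hftc : ∫ s in r..b, deriv v s = v b - v r := by
        apply intervalIntegral.integral_eq_sub_of_hasDerivAt
        · intro x hx
          rw [uIcc_of_le hrb] at hx
          have hxm := hsub hx
          have : DifferentiableAt ℝ v x := by
            apply (hv.1.differentiableOn (by norm_num) x hxm).differentiableAt
            exact isOpen_Ioo.mem_nhds hxm
          exact this.hasDerivAt
        · apply ContinuousOn.intervalIntegrable
          rw [uIcc_of_le hrb]
          exact ((subsol_deriv_contOn hv).continuousOn.mono hsub)
      have hcint : IntervalIntegrable (deriv v) volume r b := by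
        apply ContinuousOn.intervalIntegrable
        rw [uIcc_of_le hrb]
        exact (subsol_deriv_contOn hv).continuousOn.mono hsub
      have hmono' : ∫ s in r..b, hfn n k q σ a φ s ≤ ∫ s in r..b, deriv v s := by
        apply intervalIntegral.integral_mono_on hrb
          ((hfn_continuous hn1 hk hkn ha hq0 hσ hφ).intervalIntegrable r b) hcint
        intro x hx
        exact hdge x (hsub hx)
      linarith [hftc, hmono']
    -- pass to the limit b → 1⁻
    haveI hNB : (nhdsWithin (1:ℝ) (Ico r 1)).NeBot := by
      apply mem_closure_iff_nhdsWithin_neBot.mp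
      rw [closure_Ico (ne_of_lt hr.2)]
      exact ⟨hr.2.le, le_refl 1⟩
    have hvt : Tendsto v (nhdsWithin (1:ℝ) (Ico r 1)) (nhds (v 1)) := by
      have := (hv.2.1.continuousOn 1 (right_mem_Icc.2 zero_le_one)).tendsto
      exact this.mono_left (nhdsWithin_mono 1 (fun x hx => ⟨le_trans hr.1.le hx.1, hx.2.le⟩))
    have hgt : Tendsto (fun b => ∫ s in r..b, hfn n k q σ a φ s)
        (nhdsWithin (1:ℝ) (Ico r 1)) (nhds (∫ s in r..1, hfn n k q σ a φ s)) := by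
      have hc' := hfn_continuous hn1 hk hkn ha hq0 hσ hφ
      have hd := intervalIntegral.integral_hasDerivAt_right (hc'.intervalIntegrable r 1)
        (hc'.stronglyMeasurable.stronglyMeasurableAtFilter) (hc'.continuousAt (x := 1))
      exact hd.continuousAt.continuousWithinAt.tendsto
    have hfinal : v r ≤ v 1 - ∫ s in r..1, hfn n k q σ a φ s := by
      apply ge_of_tendsto (hvt.sub hgt)
      filter_upwards [self_mem_nhdsWithin] with b hb
      exact hIoo b hb
    have hv1 : v 1 ≤ 0 := hv.2.2.2.2
    rw [Top_eq_neg]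
    linarith [hfinal]
  -- full interval
  intro r hr
  rcases eq_or_lt_of_le hr.1 with h0 | h0
  · -- r = 0 : take limits from the right
    subst h0
    haveI hNB : (nhdsWithin (0:ℝ) (Ioo 0 1)).NeBot := by
      apply mem_closure_iff_nhdsWithin_neBot.mp
      rw [closure_Ioo (by norm_num : (0:ℝ) ≠ 1)]
      exact ⟨le_refl 0, zero_le_one⟩
    have hvt : Tendsto v (nhdsWithin (0:ℝ) (Ioo 0 1)) (nhds (v 0)) := by
      have := (hv.2.1.continuousOn 0 (left_mem_Icc.2 zero_le_one)).tendsto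
      exact this.mono_left (nhdsWithin_mono 0 (fun x hx => ⟨hx.1.le, hx.2.le⟩))
    have hTt : Tendsto (Top n k q σ a φ) (nhdsWithin (0:ℝ) (Ioo 0 1))
        (nhds (Top n k q σ a φ 0)) :=
      ((Top_continuous hn1 hk hkn ha hq0 hσ hφ).tendsto 0).mono_left
        (nhdsWithin_le_nhds (s := Ioo (0:ℝ) 1))
    apply le_of_tendsto_of_tendsto hvt hTt
    filter_upwards [self_mem_nhdsWithin] with x hx
    exact hmain x hx
  · rcases eq_or_lt_of_le hr.2 with h1 | h1
    · rw [h1]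
      have : Top n k q σ a φ 1 = 0 := Top_one
      rw [this]
      exact hv.2.2.2.2
    · exact hmain r ⟨h0, h1⟩

end MaxThm7

namespace MaxThm7
variable {n k : ℕ} {q σ lam : ℝ}

lemma contDiffOn_one_of_open {f : ℝ → ℝ} {s : Set ℝ} (hs : IsOpen s)
    (h1 : DifferentiableOn ℝ f s) (h2 : ContinuousOn (deriv f) s) :
    ContDiffOn ℝ 1 f s := by
  have h0 : ContDiffOn ℝ ((0:ℕ) : WithTop ℕ∞) (deriv f) s := by
    rw [show ((0:ℕ) : WithTop ℕ∞) = 0 from rfl, contDiffOn_zero]; exact h2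
  have h : ContDiffOn ℝ ((0:ℕ) + 1) f s :=
    (contDiffOn_succ_iff_deriv_of_isOpen hs).mpr ⟨h1, by simp, h0⟩
  exact_mod_cast h

lemma contDiffOn_two_of_open {f : ℝ → ℝ} {s : Set ℝ} (hs : IsOpen s)
    (h1 : DifferentiableOn ℝ f s) (h2 : ContDiffOn ℝ 1 (deriv f) s) :
    ContDiffOn ℝ 2 f s := by
  have h : ContDiffOn ℝ ((1:ℕ) + 1) f s :=
    (contDiffOn_succ_iff_deriv_of_isOpen hs).mpr ⟨h1, by simp, by exact_mod_cast h2⟩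
  exact_mod_cast h

/-- derivative of `hfn` inside `(0,1)`. -/
def Hf (n k : ℕ) (q σ a : ℝ) (φ : ℝ → ℝ) (s : ℝ) : ℝ :=
  ((((k:ℝ) - n) * s ^ ((k:ℝ) - n - 1)) * Iin n q σ a φ s
      + s ^ ((k:ℝ) - n) * igd n q σ a φ s) * (k:ℝ)⁻¹ *
    (s ^ ((k:ℝ) - n) * Iin n q σ a φ s) ^ ((k:ℝ)⁻¹ - 1)

lemma hfn_hasDerivAt {a : ℝ} (hk : 1 ≤ k) (hn : 2 * k < n) (hq0 : 0 < q) (hσ : 0 ≤ σ)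
    (ha : 0 < a) {φ : ℝ → ℝ} (hφ : Adm φ) {s : ℝ} (hs : s ∈ Ioo (0:ℝ) 1)
    (hφc : ContinuousAt φ s) :
    HasDerivAt (hfn n k q σ a φ) (Hf n k q σ a φ s) s := by
  have hn1 : 1 ≤ n := by omega
  have hgpos : 0 < s ^ ((k:ℝ) - n) * Iin n q σ a φ s :=
    mul_pos (Real.rpow_pos_of_pos hs.1 _) (Iin_pos hn1 ha hq0 hσ hφ ⟨hs.1, hs.2.le⟩)
  have h1 : HasDerivAt (fun y : ℝ => y ^ ((k:ℝ) - n))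
      (((k:ℝ) - n) * s ^ ((k:ℝ) - n - 1)) s :=
    Real.hasDerivAt_rpow_const (Or.inl hs.1.ne')
  have h2 : HasDerivAt (Iin n q σ a φ) (igd n q σ a φ s) s :=
    Iin_hasDerivAt hn1 hq0 hσ hφ (igd_continuousAt hn1 hq0 hσ hφc)
  have hg : HasDerivAt (fun y => y ^ ((k:ℝ) - n) * Iin n q σ a φ y)
      ((((k:ℝ) - n) * s ^ ((k:ℝ) - n - 1)) * Iin n q σ a φ s
        + s ^ ((k:ℝ) - n) * igd n q σ a φ s) s := h1.mul h2
  have h3 := hg.rpow_const (p := (k:ℝ)⁻¹) (Or.inl hgpos.ne')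
  apply h3.congr_of_eventuallyEq
  filter_upwards [Ioi_mem_nhds hs.1] with t ht
  unfold hfn
  rw [if_pos (mem_Ioi.mp ht)]

lemma Hf_continuousOn {a : ℝ} (hk : 1 ≤ k) (hn : 2 * k < n) (hq0 : 0 < q) (hσ : 0 ≤ σ)
    (ha : 0 < a) {φ : ℝ → ℝ} (hφ : Adm φ)
    (hφc : ∀ t ∈ Ioo (0:ℝ) 1, ContinuousAt φ t) :
    ContinuousOn (Hf n k q σ a φ) (Ioo (0:ℝ) 1) := by
  have hn1 : 1 ≤ n := by omega
  intro s hs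
  apply ContinuousAt.continuousWithinAt
  have hIc : ContinuousAt (Iin n q σ a φ) s := (Iin_continuous hn1 hq0 hσ hφ).continuousAt
  have higdc : ContinuousAt (igd n q σ a φ) s := igd_continuousAt hn1 hq0 hσ (hφc s hs)
  have hr1 : ContinuousAt (fun y : ℝ => y ^ ((k:ℝ) - n - 1)) s :=
    Real.continuousAt_rpow_const _ _ (Or.inl hs.1.ne')
  have hr2 : ContinuousAt (fun y : ℝ => y ^ ((k:ℝ) - n)) s :=
    Real.continuousAt_rpow_const _ _ (Or.inl hs.1.ne')
  have hgpos : 0 < s ^ ((k:ℝ) - n) * Iin n q σ a φ s :=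
    mul_pos (Real.rpow_pos_of_pos hs.1 _) (Iin_pos hn1 ha hq0 hσ hφ ⟨hs.1, hs.2.le⟩)
  have hg : ContinuousAt (fun y => y ^ ((k:ℝ) - n) * Iin n q σ a φ y) s := hr2.mul hIc
  have houter : ContinuousAt
      (fun y => (y ^ ((k:ℝ) - n) * Iin n q σ a φ y) ^ ((k:ℝ)⁻¹ - 1)) s :=
    hg.rpow_const (Or.inl hgpos.ne')
  exact (((continuousAt_const.mul hr1).mul hIc).add (hr2.mul higdc)).mul continuousAt_const
    |>.mul houter

end MaxThm7

namespace MaxThm7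
variable {n k : ℕ} {q σ lam : ℝ}

lemma Top_contDiffOn2 {a : ℝ} (hk : 1 ≤ k) (hn : 2 * k < n) (hq0 : 0 < q) (hσ : 0 ≤ σ)
    (ha : 0 < a) {φ : ℝ → ℝ} (hφ : Adm φ)
    (hφc : ∀ t ∈ Ioo (0:ℝ) 1, ContinuousAt φ t) :
    ContDiffOn ℝ 2 (Top n k q σ a φ) (Ioo (0:ℝ) 1) := by
  have hn1 : 1 ≤ n := by omega
  have hkn : k < n := by omega
  apply contDiffOn_two_of_open isOpen_Ioo
    (fun x hx => (Top_hasDerivAt hn1 hk hkn ha hq0 hσ hφ x).differentiableAt.differentiableWithinAt)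
  rw [Top_deriv hn1 hk hkn ha hq0 hσ hφ]
  apply contDiffOn_one_of_open isOpen_Ioo
    (fun x hx => (hfn_hasDerivAt hk hn hq0 hσ ha hφ hx (hφc x hx)).differentiableAt.differentiableWithinAt)
  apply (Hf_continuousOn hk hn hq0 hσ ha hφ hφc).congr
  intro x hx
  exact (hfn_hasDerivAt hk hn hq0 hσ ha hφ hx (hφc x hx)).deriv

lemma Top_contDiff1 {a : ℝ} (hk : 1 ≤ k) (hn : 2 * k < n) (hq0 : 0 < q) (hσ : 0 ≤ σ)
    (ha : 0 < a) {φ : ℝ → ℝ} (hφ : Adm φ) :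
    ContDiff ℝ 1 (Top n k q σ a φ) := by
  have hn1 : 1 ≤ n := by omega
  have hkn : k < n := by omega
  rw [contDiff_one_iff_deriv]
  refine ⟨fun x => (Top_hasDerivAt hn1 hk hkn ha hq0 hσ hφ x).differentiableAt, ?_⟩
  rw [Top_deriv hn1 hk hkn ha hq0 hσ hφ]
  exact hfn_continuous hn1 hk hkn ha hq0 hσ hφ

/-- If `φ` is an admissible fixed point of `Top` on `[0,1]`, then `Top φ` is a
classical radial solution. -/
lemma Top_isRadialSol (hk : 1 ≤ k) (hn : 2 * k < n) (hq : (k:ℝ) < q) (hσ : 0 ≤ σ)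
    (hlam : 0 < lam) {φ : ℝ → ℝ} (hφ : Adm φ)
    (hfix : ∀ r ∈ Icc (0:ℝ) 1, Top n k q σ (lam / cnk n k) φ r = φ r) :
    IsRadialSol n k q σ lam (Top n k q σ (lam / cnk n k) φ) := by
  have hn1 : 1 ≤ n := by omega
  have hkn : k < n := by omega
  have hq0 : 0 < q := lt_of_le_of_lt (by positivity) hq
  have hc := cnk_pos hk hn
  set a := lam / cnk n k with haa
  have ha : 0 < a := div_pos hlam hc
  set u : ℝ → ℝ := Top n k q σ a φ with hu
  have huderiv : ∀ r, HasDerivAt u (hfn n k q σ a φ r) r :=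
    fun r => Top_hasDerivAt hn1 hk hkn ha hq0 hσ hφ r
  have hud : deriv u = hfn n k q σ a φ := Top_deriv hn1 hk hkn ha hq0 hσ hφ
  have hφc : ∀ t ∈ Ioo (0:ℝ) 1, ContinuousAt φ t := by
    intro t ht
    apply ContinuousAt.congr (Top_continuous hn1 hk hkn ha hq0 hσ hφ).continuousAt
    filter_upwards [Icc_mem_nhds ht.1 ht.2] with x hx
    exact hfix x hx
  have hIdAt : ∀ r ∈ Ioo (0:ℝ) 1, HasDerivAt (Iin n q σ a φ) (igd n q σ a φ r) r :=
    fun r hr => Iin_hasDerivAt hn1 hq0 hσ hφ (igd_continuousAt hn1 hq0 hσ (hφc r hr))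
  have hIpos : ∀ r ∈ Ioo (0:ℝ) 1, 0 < Iin n q σ a φ r :=
    fun r hr => Iin_pos hn1 ha hq0 hσ hφ ⟨hr.1, hr.2.le⟩
  refine ⟨Top_contDiffOn2 hk hn hq0 hσ ha hφ hφc,
    (Top_contDiff1 hk hn hq0 hσ ha hφ).contDiffOn, ?_, Top_one, ?_, ?_, ?_⟩
  · -- deriv u 0 = 0
    rw [hud]
    unfold hfn
    rw [if_neg (lt_irrefl 0)]
  · -- u < 0 on Ioo
    exact fun r hr => Top_neg hn1 hk hkn ha hq0 hσ hφ hr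
  · -- monotonicity conditions
    intro i hi1 hik r hr
    set β : ℝ := (i:ℝ) * (k:ℝ)⁻¹ with hβ
    set α : ℝ := ((n:ℝ) - i) + ((k:ℝ) - n) * β with hα
    have hβpos : 0 < β := by positivity
    have hβ1 : β ≤ 1 := by
      rw [hβ, ← div_eq_mul_inv, div_le_one (by positivity : (0:ℝ) < (k:ℝ))]
      exact_mod_cast hik
    have hαnn : 0 ≤ α := by
      have hik' : (i:ℝ) ≤ (k:ℝ) := by exact_mod_cast hik
      have hkn' : (k:ℝ) ≤ (n:ℝ) := by exact_mod_cast hkn.le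
      have hin' : (i:ℝ) ≤ (n:ℝ) := le_trans hik' hkn'
      have hk0 : ((k:ℝ)) ≠ 0 := by positivity
      have : α = ((n:ℝ) - i) * (1 - β) + ((k:ℝ) - i) * β := by
        rw [hα, hβ]; field_simp; ring
      rw [this]
      apply add_nonneg
      · exact mul_nonneg (by linarith) (by linarith)
      · exact mul_nonneg (by linarith) hβpos.le
    -- the function agrees with s^α * (Iin s)^β near r
    have hev : (fun s => s ^ ((n:ℝ) - i) * (deriv u s) ^ i)
        =ᶠ[nhds r] (fun s => s ^ α * (Iin n q σ a φ s) ^ β) := by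
      filter_upwards [Ioo_mem_nhds hr.1 hr.2] with s hs
      have hs0 : (0:ℝ) < s := hs.1
      have hInn : 0 ≤ Iin n q σ a φ s := (hIpos s hs).le
      rw [hud]
      unfold hfn
      rw [if_pos hs0]
      have hbnn : 0 ≤ s ^ ((k:ℝ) - n) * Iin n q σ a φ s :=
        mul_nonneg (Real.rpow_nonneg hs0.le _) hInn
      rw [← Real.rpow_natCast ((s ^ ((k:ℝ) - n) * Iin n q σ a φ s) ^ ((k:ℝ)⁻¹)) i,
        ← Real.rpow_mul hbnn]
      rw [show (k:ℝ)⁻¹ * (i:ℕ) = β from by rw [hβ]; ring]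
      rw [Real.mul_rpow (Real.rpow_nonneg hs0.le _) hInn]
      rw [← Real.rpow_mul hs0.le]
      rw [← mul_assoc, ← Real.rpow_add hs0]
    rw [hev.deriv_eq]
    -- compute the derivative of the nice function
    have hd1 : HasDerivAt (fun y : ℝ => y ^ α) (α * r ^ (α - 1)) r :=
      Real.hasDerivAt_rpow_const (Or.inl hr.1.ne')
    have hd2 : HasDerivAt (fun y => (Iin n q σ a φ y) ^ β)
        (igd n q σ a φ r * β * (Iin n q σ a φ r) ^ (β - 1)) r :=
      (hIdAt r hr).rpow_const (Or.inl (hIpos r hr).ne')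
    have hd := hd1.fun_mul hd2
    rw [hd.deriv]
    have t1 : 0 ≤ α * r ^ (α - 1) * Iin n q σ a φ r ^ β :=
      mul_nonneg (mul_nonneg hαnn (Real.rpow_nonneg hr.1.le _))
        (Real.rpow_nonneg (hIpos r hr).le _)
    have t2 : 0 ≤ r ^ α * (igd n q σ a φ r * β * Iin n q σ a φ r ^ (β - 1)) := by
      apply mul_nonneg (Real.rpow_nonneg hr.1.le _)
      apply mul_nonneg (mul_nonneg _ hβpos.le) (Real.rpow_nonneg (hIpos r hr).le _)
      exact igd_nonneg ha.le hq0 hφ.2.1 ⟨hr.1.le, hr.2.le⟩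
    linarith
  · -- the equation
    intro r hr
    have hev : (fun s => s ^ ((n:ℝ) - k) * (deriv u s) ^ k)
        =ᶠ[nhds r] (Iin n q σ a φ) := by
      filter_upwards [Ioo_mem_nhds hr.1 hr.2] with s hs
      rw [hud, hfn_pow hk ha.le hq0 hφ.2.1 ⟨hs.1, hs.2.le⟩]
      rw [← mul_assoc, ← Real.rpow_add hs.1]
      norm_num
    rw [hev.deriv_eq, (hIdAt r hr).deriv]
    have hfixr : φ r = u r := (hfix r ⟨hr.1.le, hr.2.le⟩).symm
    unfold igd
    rw [hfixr]
    rw [show cnk n k * r ^ (1 - (n:ℝ)) * (a * r ^ ((n:ℝ) - 1 + σ) * (1 - u r) ^ q)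
        = (cnk n k * a) * (r ^ (1 - (n:ℝ)) * r ^ ((n:ℝ) - 1 + σ)) * (1 - u r) ^ q from by ring]
    rw [← Real.rpow_add hr.1]
    rw [show (1 - (n:ℝ)) + ((n:ℝ) - 1 + σ) = σ from by ring]
    rw [haa]
    field_simp

end MaxThm7

namespace MaxThm7
variable {n k : ℕ} {q σ lam : ℝ}

lemma igd_abs_le {a : ℝ} (hn1 : 1 ≤ n) (hq0 : 0 < q) (hσ : 0 ≤ σ) {φ : ℝ → ℝ} {C t : ℝ}
    (ht : t ∈ Icc (0:ℝ) 1) (hb : |φ t| ≤ C) :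
    |igd n q σ a φ t| ≤ |a| * (1 + C) ^ q := by
  have he : (0:ℝ) ≤ (n : ℝ) - 1 + σ := by
    have : (1:ℝ) ≤ (n:ℝ) := by exact_mod_cast hn1
    linarith
  have h1 : |t ^ ((n : ℝ) - 1 + σ)| ≤ 1 := by
    rw [abs_of_nonneg (Real.rpow_nonneg ht.1 _)]
    exact Real.rpow_le_one ht.1 ht.2 he
  have h2 : |(1 - φ t) ^ q| ≤ (1 + C) ^ q := F_abs_le hq0 hb
  calc |igd n q σ a φ t| = |a| * |t ^ ((n : ℝ) - 1 + σ)| * |(1 - φ t) ^ q| := by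
        unfold igd; rw [abs_mul, abs_mul]
    _ ≤ |a| * 1 * ((1 + C) ^ q) := by
        apply mul_le_mul (mul_le_mul le_rfl h1 (abs_nonneg _) (abs_nonneg _)) h2 (abs_nonneg _)
        positivity
    _ = |a| * (1 + C) ^ q := by ring

lemma sol_to_subsol {lam' : ℝ} {u : ℝ → ℝ} (hu : IsRadialSol n k q σ lam' u)
    (h2 : lam ≤ lam') (hlam : 0 ≤ lam) : IsRadialSubsol n k q σ lam u := by
  obtain ⟨hc2, hc1, _, hu1, hneg, hmono, hpde⟩ := hu
  refine ⟨hc2, hc1, hmono, ?_, le_of_eq hu1⟩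
  intro r hr
  have hF : 0 ≤ (1 - u r) ^ q := Real.rpow_nonneg (by linarith [hneg r hr]) _
  have hr0 : 0 ≤ r ^ σ := Real.rpow_nonneg hr.1.le _
  calc lam * r ^ σ * (1 - u r) ^ q ≤ lam' * r ^ σ * (1 - u r) ^ q :=
        mul_le_mul_of_nonneg_right (mul_le_mul_of_nonneg_right h2 hr0) hF
    _ = _ := (hpde r hr).symm

set_option maxHeartbeats 1000000 in
/-- existence of a maximal solution below a given subsolution level. -/
lemma exists_maximal (hk : 1 ≤ k) (hn : 2 * k < n) (hq : (k:ℝ) < q) (hσ : 0 ≤ σ)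
    (hlam : 0 < lam) {w : ℝ → ℝ} (hw : IsRadialSubsol n k q σ lam w) :
    ∃ u : ℝ → ℝ, IsRadialSol n k q σ lam u ∧
      ∀ v : ℝ → ℝ, IsRadialSubsol n k q σ lam v → ∀ r ∈ Icc (0:ℝ) 1, v r ≤ u r := by
  have hn1 : 1 ≤ n := by omega
  have hkn : k < n := by omega
  have hq0 : 0 < q := lt_of_le_of_lt (by positivity) hq
  have hc := cnk_pos hk hn
  set a := lam / cnk n k with haa
  have ha : 0 < a := div_pos hlam hc
  set seq : ℕ → ℝ → ℝ := fun m => (Top n k q σ a)^[m] (fun _ => (0:ℝ)) with hseq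
  have hseq_succ : ∀ m, seq (m + 1) = Top n k q σ a (seq m) := by
    intro m
    rw [hseq]
    exact Function.iterate_succ_apply' _ _ _
  have hseq0 : seq 0 = fun _ => (0:ℝ) := rfl
  -- admissibility and continuity of all iterates
  have hCA : ∀ m, Continuous (seq m) ∧ Adm (seq m) := by
    intro m
    induction m with
    | zero =>
      constructor
      · exact continuous_const
      · apply adm_of_continuous continuous_const
        intro t _
        exact le_refl 0
    | succ m ih =>
      rw [hseq_succ m]
      exact ⟨Top_continuous hn1 hk hkn ha hq0 hσ ih.2, Top_adm hn1 hk hkn ha hq0 hσ ih.2⟩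
  -- every subsolution is below every iterate
  have hsub : ∀ v : ℝ → ℝ, IsRadialSubsol n k q σ lam v →
      ∀ m, ∀ r ∈ Icc (0:ℝ) 1, v r ≤ seq m r := by
    intro v hv m
    induction m with
    | zero => exact fun r hr => subsol_nonpos hk hn hv r hr
    | succ m ih =>
      rw [hseq_succ m]
      exact subsol_le_Top hk hn hq hσ hlam hv (hCA m).2 ih
  -- the iterates decrease on [0,1]
  have hanti : ∀ m, ∀ r ∈ Icc (0:ℝ) 1, seq (m + 1) r ≤ seq m r := by
    intro m
    induction m with
    | zero =>
      intro r hr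
      rw [hseq_succ 0]
      exact Top_nonpos hn1 hk hkn ha hq0 hσ (hCA 0).2 hr
    | succ m ih =>
      intro r hr
      rw [hseq_succ (m+1)]
      conv_rhs => rw [hseq_succ m]
      exact Top_mono hn1 hk hkn ha hq0 hσ (hCA (m+1)).2 (hCA m).2 ih hr
  -- uniform bound from w
  obtain ⟨Cw, hCw⟩ := isCompact_Icc.exists_bound_of_continuousOn hw.2.1.continuousOn
  set C0 : ℝ := max Cw 0 with hC0
  have hseqb : ∀ m, ∀ t ∈ Icc (0:ℝ) 1, |seq m t| ≤ C0 := by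
    intro m t ht
    have h1 : w t ≤ seq m t := hsub w hw m t ht
    have h2 : seq m t ≤ 0 := (hCA m).2.2.1 t ht
    rw [abs_le]
    constructor
    · calc -C0 ≤ -|w t| := by
            have := hCw t ht
            simp only [hC0]
            rw [neg_le_neg_iff]
            exact le_max_of_le_left (by simpa using this)
        _ ≤ w t := neg_abs_le _
        _ ≤ seq m t := h1
    · exact le_trans h2 (le_max_right _ _)
  -- the limit function
  set φω : ℝ → ℝ := fun r => if r ∈ Icc (0:ℝ) 1 then ⨅ m, seq m r else 0 with hφω
  have hφωIcc : ∀ r ∈ Icc (0:ℝ) 1, φω r = ⨅ m, seq m r := by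
    intro r hr
    rw [hφω]
    simp only [if_pos hr]
  have hbdd : ∀ r ∈ Icc (0:ℝ) 1, BddBelow (range fun m => seq m r) := by
    intro r hr
    exact ⟨w r, forall_mem_range.2 fun m => hsub w hw m r hr⟩
  have hφωle0 : ∀ t ∈ Icc (0:ℝ) 1, φω t ≤ 0 := by
    intro t ht
    rw [hφωIcc t ht]
    exact le_trans (ciInf_le (hbdd t ht) 0) (by rw [hseq0])
  have hφωb : ∀ t, |φω t| ≤ C0 := by
    intro t
    rcases em (t ∈ Icc (0:ℝ) 1) with h | h
    · have h1 : w t ≤ φω t := by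
        rw [hφωIcc t h]
        exact le_ciInf fun m => hsub w hw m t h
      have h2 : φω t ≤ 0 := hφωle0 t h
      rw [abs_le]
      constructor
      · calc -C0 ≤ -|w t| := by
              have := hCw t h
              simp only [hC0]
              rw [neg_le_neg_iff]
              exact le_max_of_le_left (by simpa using this)
          _ ≤ w t := neg_abs_le _
          _ ≤ φω t := h1
      · exact le_trans h2 (le_max_right _ _)
    · rw [hφω]
      simp only [if_neg h]
      simp only [hC0]
      simp [le_max_right]
  have hφωadm : Adm φω := by
    refine ⟨?_, hφωle0, fun R _ => ⟨C0, fun t _ => hφωb t⟩⟩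
    apply Measurable.ite measurableSet_Icc _ measurable_const
    exact Measurable.iInf fun m => ((hCA m).1).measurable
  have htend : ∀ r ∈ Icc (0:ℝ) 1, Tendsto (fun m => seq m r) atTop (nhds (φω r)) := by
    intro r hr
    rw [hφωIcc r hr]
    exact tendsto_atTop_ciInf (antitone_nat_of_succ_le fun m => hanti m r hr) (hbdd r hr)
  -- convergence of the integrals
  have hIin_tend : ∀ s ∈ Icc (0:ℝ) 1,
      Tendsto (fun m => Iin n q σ a (seq m) s) atTop (nhds (Iin n q σ a φω s)) := by
    intro s hs
    apply intervalIntegral.tendsto_integral_filter_of_dominated_convergence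
      (fun _ => |a| * (1 + C0) ^ q)
    · filter_upwards with m
      exact (igd_measurable (hCA m).2.1).aestronglyMeasurable.restrict
    · filter_upwards with m
      filter_upwards with x hx
      have hx' : x ∈ Icc (0:ℝ) 1 := by
        rw [uIoc_of_le hs.1] at hx
        exact ⟨hx.1.le, le_trans hx.2 hs.2⟩
      exact igd_abs_le hn1 hq0 hσ hx' (hseqb m x hx')
    · exact intervalIntegrable_const
    · filter_upwards with x hx
      have hx' : x ∈ Icc (0:ℝ) 1 := by
        rw [uIoc_of_le hs.1] at hx
        exact ⟨hx.1.le, le_trans hx.2 hs.2⟩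
      unfold igd
      apply Tendsto.const_mul
      exact ((contF hq0).tendsto (φω x)).comp (htend x hx')
  have hfn_tend : ∀ s ∈ Icc (0:ℝ) 1,
      Tendsto (fun m => hfn n k q σ a (seq m) s) atTop (nhds (hfn n k q σ a φω s)) := by
    intro s hs
    rcases eq_or_lt_of_le hs.1 with h0 | h0
    · have : ∀ m, hfn n k q σ a (seq m) s = 0 := by
        intro m
        unfold hfn
        rw [if_neg (by rw [← h0]; exact lt_irrefl 0)]
      simp only [this]
      have : hfn n k q σ a φω s = 0 := by
        unfold hfn
        rw [if_neg (by rw [← h0]; exact lt_irrefl 0)]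
      rw [this]
      exact tendsto_const_nhds
    · have hform : ∀ ψ : ℝ → ℝ, hfn n k q σ a ψ s = (s ^ ((k:ℝ) - n) * Iin n q σ a ψ s) ^ ((k:ℝ)⁻¹) := by
        intro ψ
        unfold hfn
        rw [if_pos h0]
      simp only [hform]
      apply Tendsto.comp (contPow ((k:ℝ)⁻¹) (by positivity)).continuousAt
      exact Tendsto.const_mul _ (hIin_tend s hs)
  have hTop_tend : ∀ r ∈ Icc (0:ℝ) 1,
      Tendsto (fun m => Top n k q σ a (seq m) r) atTop (nhds (Top n k q σ a φω r)) := by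
    intro r hr
    apply intervalIntegral.tendsto_integral_filter_of_dominated_convergence
      (fun _ => (a * (1 + C0) ^ q / ((n:ℝ) + σ)) ^ ((k:ℝ)⁻¹))
    · filter_upwards with m
      exact (hfn_continuous hn1 hk hkn ha hq0 hσ (hCA m).2).measurable.aestronglyMeasurable.restrict
    · filter_upwards with m
      filter_upwards with x hx
      have hx' : x ∈ Icc (0:ℝ) 1 := by
        rw [uIoc_comm, uIoc_of_le hr.2] at hx
        exact ⟨le_trans hr.1 hx.1.le, hx.2⟩
      rw [Real.norm_eq_abs, abs_of_nonneg (hfn_nonneg ha.le hq0 (hCA m).2.2.1 hx'.2)]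
      calc hfn n k q σ a (seq m) x
          ≤ (a * (1 + C0) ^ q / ((n:ℝ) + σ)) ^ ((k:ℝ)⁻¹) * x ^ (((k:ℝ) + σ) * ((k:ℝ)⁻¹)) :=
            hfn_le_bound hn1 hk hkn ha hq0 hσ (hCA m).2 (hseqb m) hx'
        _ ≤ (a * (1 + C0) ^ q / ((n:ℝ) + σ)) ^ ((k:ℝ)⁻¹) * 1 := by
            apply mul_le_mul_of_nonneg_left _ (Real.rpow_nonneg (by positivity) _)
            exact Real.rpow_le_one hx'.1 hx'.2 (by positivity)
        _ = (a * (1 + C0) ^ q / ((n:ℝ) + σ)) ^ ((k:ℝ)⁻¹) := mul_one _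
    · exact intervalIntegrable_const
    · filter_upwards with x hx
      have hx' : x ∈ Icc (0:ℝ) 1 := by
        rw [uIoc_comm, uIoc_of_le hr.2] at hx
        exact ⟨le_trans hr.1 hx.1.le, hx.2⟩
      exact hfn_tend x hx'
  -- fixed point property
  have hfix : ∀ r ∈ Icc (0:ℝ) 1, Top n k q σ a φω r = φω r := by
    intro r hr
    have h1 : Tendsto (fun m => seq (m + 1) r) atTop (nhds (φω r)) :=
      (htend r hr).comp (tendsto_add_atTop_nat 1)
    have h2 : Tendsto (fun m => seq (m + 1) r) atTop (nhds (Top n k q σ a φω r)) := by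
      have := hTop_tend r hr
      apply Tendsto.congr _ this
      intro m
      rw [hseq_succ m]
    exact tendsto_nhds_unique h2 h1
  -- conclusion
  refine ⟨Top n k q σ a φω, ?_, ?_⟩
  · rw [haa]
    apply Top_isRadialSol hk hn hq hσ hlam hφωadm
    rw [← haa]
    exact hfix
  · intro v hv r hr
    rw [hfix r hr, hφωIcc r hr]
    exact le_ciInf fun m => hsub v hv m r hr

end MaxThm7


/-- if `(P_{λ₀})` has a classical radial solution then for every
`λ ∈ (0,λ₀)` problem `(P_λ)` has a maximal (bounded) classical radial solution, and the
maximal solutions decrease as `λ` increases. -/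
theorem maximal_solution_below (n k : ℕ) (hk : 1 ≤ k) (hn : 2 * k < n)
    (q σ : ℝ) (hq : (k : ℝ) < q) (hσ : 0 ≤ σ)
    (lam₀ : ℝ) (hlam₀ : 0 < lam₀) (hex : ∃ w : ℝ → ℝ, IsRadialSol n k q σ lam₀ w) :
    (∀ lam : ℝ, 0 < lam → lam < lam₀ →
      ∃ u : ℝ → ℝ, IsRadialSol n k q σ lam u ∧
        ∀ v : ℝ → ℝ, IsRadialSubsol n k q σ lam v → ∀ r ∈ Icc (0:ℝ) 1, v r ≤ u r) ∧
    (∀ lam₁ lam₂ : ℝ, 0 < lam₁ → lam₁ < lam₂ → lam₂ < lam₀ →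
      ∀ u₁ u₂ : ℝ → ℝ,
        (IsRadialSol n k q σ lam₁ u₁ ∧
          ∀ v : ℝ → ℝ, IsRadialSubsol n k q σ lam₁ v → ∀ r ∈ Icc (0:ℝ) 1, v r ≤ u₁ r) →
        (IsRadialSol n k q σ lam₂ u₂ ∧
          ∀ v : ℝ → ℝ, IsRadialSubsol n k q σ lam₂ v → ∀ r ∈ Icc (0:ℝ) 1, v r ≤ u₂ r) →
        ∀ r ∈ Icc (0:ℝ) 1, u₂ r ≤ u₁ r) := by
  obtain ⟨w, hw⟩ := hex
  constructor
  · intro lam h0 hlt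
    exact MaxThm7.exists_maximal hk hn hq hσ h0
      (MaxThm7.sol_to_subsol hw (le_of_lt hlt) h0.le)
  · rintro lam₁ lam₂ h1 h12 h20 u₁ u₂ ⟨hu₁sol, hu₁max⟩ ⟨hu₂sol, hu₂max⟩ r hr
    exact hu₁max u₂ (MaxThm7.sol_to_subsol hu₂sol (le_of_lt h12) h1.le) r hr
end
end

section
/- Let w ∈ C² be a solution of (r^{n-k}(w'(r))^k)' = c_{n,k}^{-1} λ r^{n-1+σ} (-w(r))^q on an open interval I ⊂ (0,∞), with w < 0 and w' > 0 on I. Define, for t with e^t ∈ I, x(t) = c_{n,k}^{-1} λ e^{(k+σ)t} (-w(e^t))^q / (w'(e^t))^k and y(t) = e^t w'(e^t) / (-w(e^t)). Then (x,y) solves the Lotka–Volterra system (LV): dx/dt = x[n + σ - x - q y] and dy/dt = y[-(n-2k)/k + x/k + y]. -/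
open Real Set Filter MeasureTheory

noncomputable section

private lemma alg_x (nn kk qq σσ r C E P P1 V Vk Vk1 D Wn : ℝ)
    (hWn : Wn ≠ 0) (hVk : Vk ≠ 0) (hkk : kk ≠ 0) (hVk1 : Vk1 ≠ 0) (hr : r ≠ 0)
    (hP1 : P1 * Wn = P) (hVkV : Vk1 * V = Vk)
    (h3 : (nn - kk) * Vk + kk * Vk1 * D * r = C * E * P) :
    ((C * (E * (kk + σσ)) * P + C * E * (-(V * r) * qq * P1)) * Vk -
        C * E * P * (kk * Vk1 * (D * r))) / Vk ^ 2 =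
      C * E * P / Vk * (nn + σσ - C * E * P / Vk - qq * (r * V / Wn)) := by
  have hD : D = (C * E * P - (nn - kk) * Vk) / (kk * Vk1 * r) := by
    field_simp; linarith [h3]
  subst hD; subst hP1; subst hVkV
  have hV : V ≠ 0 := right_ne_zero_of_mul hVk
  field_simp; ring

private lemma alg_y (nn kk r C E P V Vk Vk1 D Wn : ℝ)
    (hWn : Wn ≠ 0) (hVk : Vk ≠ 0) (hkk : kk ≠ 0) (hVk1 : Vk1 ≠ 0) (hr : r ≠ 0) (hV : V ≠ 0)
    (hVkV : Vk1 * V = Vk)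
    (h3 : (nn - kk) * Vk + kk * Vk1 * D * r = C * E * P) :
    ((r * V + r * (D * r)) * Wn - r * V * -(V * r)) / Wn ^ 2 =
      r * V / Wn * (-((nn - 2 * kk) / kk) + C * E * P / Vk / kk + r * V / Wn) := by
  have hD : D = (C * E * P - (nn - kk) * Vk) / (kk * Vk1 * r) := by
    field_simp; linarith [h3]
  subst hD; subst hVkV
  field_simp; ring

/-- the change of variables
`x(t) = c_{n,k}⁻¹ λ e^{(k+σ)t}(-w(e^t))^q/(w'(e^t))^k`, `y(t) = e^t w'(e^t)/(-w(e^t))`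
transforms a negative increasing solution `w` of
`(r^{n-k}(w')^k)' = c_{n,k}⁻¹ λ r^{n-1+σ}(-w)^q` on an open interval `I ⊂ (0,∞)` into a
solution of the Lotka–Volterra system (LV). -/
theorem change_of_variables_LV (n k : ℕ) (hk : 1 ≤ k) (hn : 2 * k < n)
    (q σ lam : ℝ) (hq : (k : ℝ) < q) (hσ : 0 ≤ σ) (hlam : 0 < lam)
    (a b : ℝ) (ha : 0 ≤ a) (w : ℝ → ℝ)
    (hreg : ContDiffOn ℝ 2 w (Ioo a b))
    (hneg : ∀ r ∈ Ioo a b, w r < 0)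
    (hinc : ∀ r ∈ Ioo a b, 0 < deriv w r)
    (heq : ∀ r ∈ Ioo a b,
      deriv (fun s => s ^ ((n : ℝ) - k) * (deriv w s) ^ k) r =
        (cnk n k)⁻¹ * lam * r ^ ((n : ℝ) - 1 + σ) * (-w r) ^ q) :
    ∀ t : ℝ, Real.exp t ∈ Ioo a b →
      HasDerivAt
        (fun t => (cnk n k)⁻¹ * lam * Real.exp (((k : ℝ) + σ) * t) *
          (-w (Real.exp t)) ^ q / (deriv w (Real.exp t)) ^ k)
        (((cnk n k)⁻¹ * lam * Real.exp (((k : ℝ) + σ) * t) *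
            (-w (Real.exp t)) ^ q / (deriv w (Real.exp t)) ^ k) *
          ((n : ℝ) + σ -
            (cnk n k)⁻¹ * lam * Real.exp (((k : ℝ) + σ) * t) *
              (-w (Real.exp t)) ^ q / (deriv w (Real.exp t)) ^ k -
            q * (Real.exp t * deriv w (Real.exp t) / (-w (Real.exp t))))) t ∧
      HasDerivAt
        (fun t => Real.exp t * deriv w (Real.exp t) / (-w (Real.exp t)))
        ((Real.exp t * deriv w (Real.exp t) / (-w (Real.exp t))) *
          (-(((n : ℝ) - 2 * k) / k) +
            (cnk n k)⁻¹ * lam * Real.exp (((k : ℝ) + σ) * t) *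
              (-w (Real.exp t)) ^ q / (deriv w (Real.exp t)) ^ k / k +
            Real.exp t * deriv w (Real.exp t) / (-w (Real.exp t)))) t := by
  intro t ht
  have hr0 : (0:ℝ) < Real.exp t := Real.exp_pos t
  set r := Real.exp t with hrdef
  have hW : w r < 0 := hneg r ht
  have hWpos : (0:ℝ) < -w r := by linarith
  have hWne : -w r ≠ 0 := ne_of_gt hWpos
  have hV : 0 < deriv w r := hinc r ht
  have hVne : deriv w r ≠ 0 := ne_of_gt hV
  have hVkne : (deriv w r) ^ k ≠ 0 := pow_ne_zero _ hVne
  have hVk1ne : (deriv w r) ^ (k-1) ≠ 0 := pow_ne_zero _ hVne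
  have hkne : (k:ℝ) ≠ 0 := by positivity
  have hrne : r ≠ 0 := ne_of_gt hr0
  have hO : Ioo a b ∈ nhds r := isOpen_Ioo.mem_nhds ht
  have hw1 : HasDerivAt w (deriv w r) r :=
    ((hreg.contDiffAt hO).differentiableAt (by norm_num)).hasDerivAt
  have hdC : ContDiffOn ℝ 1 (deriv w) (Ioo a b) :=
    hreg.deriv_of_isOpen isOpen_Ioo (by norm_num)
  have hw2 : HasDerivAt (deriv w) (deriv (deriv w) r) r :=
    ((hdC.contDiffAt hO).differentiableAt (by norm_num)).hasDerivAt
  set V := deriv w r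
  set D := deriv (deriv w) r
  set C := (cnk n k)⁻¹ * lam with hCdef
  -- the ODE at r, expanded
  have hrpow : HasDerivAt (fun s : ℝ => s ^ ((n:ℝ) - k))
      (((n:ℝ) - k) * r ^ ((n:ℝ) - k - 1)) r :=
    Real.hasDerivAt_rpow_const (Or.inl hrne)
  have hF : HasDerivAt (fun s => s ^ ((n:ℝ) - k) * (deriv w s) ^ k)
      (((n:ℝ) - k) * r ^ ((n:ℝ) - k - 1) * V ^ k +
        r ^ ((n:ℝ) - k) * ((k:ℝ) * V ^ (k-1) * D)) r :=
    hrpow.mul (hw2.pow k)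
  have hE : ((n:ℝ) - k) * r ^ ((n:ℝ) - k - 1) * V ^ k +
      r ^ ((n:ℝ) - k) * ((k:ℝ) * V ^ (k-1) * D) = C * r ^ ((n:ℝ) - 1 + σ) * (-w r) ^ q := by
    rw [← hF.deriv]; exact heq r ht
  have hrE : ∀ c : ℝ, r ^ c = Real.exp (c * t) := by
    intro c
    rw [Real.rpow_def_of_pos hr0, hrdef, Real.log_exp, mul_comm]
  have e1 : r ^ ((n:ℝ) - k - 1) * r ^ ((k:ℝ) + 1 - n) = 1 := by
    rw [← Real.rpow_add hr0, show ((n:ℝ) - k - 1 + ((k:ℝ) + 1 - n)) = 0 by ring,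
      Real.rpow_zero]
  have e2 : r ^ ((n:ℝ) - k) * r ^ ((k:ℝ) + 1 - n) = r := by
    rw [← Real.rpow_add hr0, show ((n:ℝ) - k + ((k:ℝ) + 1 - n)) = 1 by ring,
      Real.rpow_one]
  have e3 : r ^ ((n:ℝ) - 1 + σ) * r ^ ((k:ℝ) + 1 - n) = Real.exp (((k:ℝ) + σ) * t) := by
    rw [← Real.rpow_add hr0, show ((n:ℝ) - 1 + σ + ((k:ℝ) + 1 - n)) = (k:ℝ) + σ by ring,
      hrE]
  have h3 : ((n:ℝ) - k) * V ^ k + (k:ℝ) * V ^ (k-1) * D * r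
      = C * Real.exp (((k:ℝ) + σ) * t) * (-w r) ^ q := by
    calc ((n:ℝ) - k) * V ^ k + (k:ℝ) * V ^ (k-1) * D * r
        = (((n:ℝ) - k) * r ^ ((n:ℝ) - k - 1) * V ^ k +
            r ^ ((n:ℝ) - k) * ((k:ℝ) * V ^ (k-1) * D)) * r ^ ((k:ℝ) + 1 - n) := by
          linear_combination (-((n:ℝ) - k) * V ^ k) * e1 - ((k:ℝ) * V ^ (k-1) * D) * e2
      _ = C * Real.exp (((k:ℝ) + σ) * t) * (-w r) ^ q := by
          rw [hE]
          linear_combination (C * (-w r) ^ q) * e3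
  -- auxiliary product identities
  have hP1 : (-w r) ^ (q - 1) * (-w r) = (-w r) ^ q := by
    rw [← Real.rpow_add_one hWne]; norm_num
  have hVkV : V ^ (k - 1) * V = V ^ k := by
    rw [← pow_succ, Nat.sub_add_cancel hk]
  -- building blocks for the t-derivatives
  have hexp : HasDerivAt Real.exp r t := by simpa [hrdef] using Real.hasDerivAt_exp t
  have hwc : HasDerivAt (fun u => w (Real.exp u)) (V * r) t := hw1.comp t hexp
  have hnegc : HasDerivAt (fun u => -w (Real.exp u)) (-(V * r)) t := hwc.neg
  have hPc : HasDerivAt (fun u => (-w (Real.exp u)) ^ q)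
      (-(V * r) * q * (-w r) ^ (q - 1)) t :=
    hnegc.rpow_const (Or.inl hWne)
  have hVc : HasDerivAt (fun u => deriv w (Real.exp u)) (D * r) t := by
    have := hw2.comp t hexp; exact this
  have hVkc : HasDerivAt (fun u => (deriv w (Real.exp u)) ^ k)
      ((k:ℝ) * V ^ (k - 1) * (D * r)) t := hVc.pow k
  have hE1c : HasDerivAt (fun u => Real.exp (((k:ℝ) + σ) * u))
      (Real.exp (((k:ℝ) + σ) * t) * ((k:ℝ) + σ)) t := by
    simpa using (((hasDerivAt_id t).const_mul ((k:ℝ) + σ)).exp)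
  constructor
  · have hx0 := (((hE1c.const_mul C).mul hPc).div hVkc hVkne)
    refine hx0.congr_deriv ?_
    exact (alg_x (n:ℝ) (k:ℝ) q σ r C (Real.exp (((k:ℝ) + σ) * t)) ((-w r) ^ q)
      ((-w r) ^ (q - 1)) V (V ^ k) (V ^ (k - 1)) D (-w r) hWne hVkne hkne hVk1ne hrne
      hP1 hVkV h3)
  · have hy0 := (hexp.mul hVc).div hnegc hWne
    refine hy0.congr_deriv ?_
    exact (alg_y (n:ℝ) (k:ℝ) r C (Real.exp (((k:ℝ) + σ) * t)) ((-w r) ^ q)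
      V (V ^ k) (V ^ (k - 1)) D (-w r) hWne hVkne hkne hVk1ne hrne hVne hVkV h3)
end
end

section
/- Let q = q*(k,σ) and define the vector field F₁(x,y) = x(n + σ - x - q*(k,σ)·y), F₂(x,y) = y(-(n-2k)/k + x/k + y). Then the line ((n-2k)/k)·x + (n+σ)·y = ((n-2k)/k)·(n+σ) is invariant: at every point (x,y) on this line, ((n-2k)/k)·F₁(x,y) + (n+σ)·F₂(x,y) = 0. -/
open Real Set Filter MeasureTheory

noncomputable section

/-- for `q = q*(k,σ)` the line `((n-2k)/k)x + (n+σ)y = ((n-2k)/k)(n+σ)`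
is invariant for the Lotka–Volterra vector field. -/
theorem invariant_line (n k : ℕ) (hk : 1 ≤ k) (hn : 2 * k < n) (σ : ℝ) (hσ : 0 ≤ σ) :
    ∀ x y : ℝ,
      ((n : ℝ) - 2 * k) / k * x + ((n : ℝ) + σ) * y = ((n : ℝ) - 2 * k) / k * ((n : ℝ) + σ) →
      ((n : ℝ) - 2 * k) / k * (x * ((n : ℝ) + σ - x - qstar n k σ * y)) +
          ((n : ℝ) + σ) * (y * (-(((n : ℝ) - 2 * k) / k) + x / k + y)) = 0 := by
  intro x y h
  have hk0 : (k:ℝ) ≠ 0 := by positivity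
  have hd : (n:ℝ) - 2*k ≠ 0 := by
    have : (2*k : ℝ) < n := by exact_mod_cast hn
    linarith
  have hq : qstar n k σ * ((n:ℝ) - 2*k) = ((n:ℝ)+2)*k + σ*((k:ℝ)+1) := by
    unfold qstar; field_simp
  have hkk : (k:ℝ) * (k:ℝ)⁻¹ = 1 := mul_inv_cancel₀ hk0
  linear_combination (y - x) * h - (x*y/k) * hq - (x*y*((n:ℝ)+σ)) * hkk
end
end

section
/- Let λ > 0 and c > 0, and define w_c(r) = -λ^{-(n-2k)/((2k+σ)(k+1))} · [c · binom(n,k) · ((n+σ)/n) · ((n-2k)/k)^k]^{(n-2k)/((2k+σ)(k+1))} · (c + r^{(2k+σ)/k})^{-(n-2k)/(2k+σ)}. Then w_c satisfies c_{n,k} r^{1-n} (r^{n-k}(w_c'(r))^k)' = λ r^σ (-w_c(r))^{q*(k,σ)} for every r > 0. -/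
open Real Set Filter MeasureTheory

noncomputable section

/-- The Bliss-type function `w_c`. -/
def wFun (n k : ℕ) (σ lam c : ℝ) : ℝ → ℝ := fun r =>
  -(lam ^ (-(((n : ℝ) - 2 * k) / ((2 * (k : ℝ) + σ) * ((k : ℝ) + 1)))) *
    (c * (n.choose k : ℝ) * (((n : ℝ) + σ) / n) * (((n : ℝ) - 2 * k) / k) ^ k) ^
      (((n : ℝ) - 2 * k) / ((2 * (k : ℝ) + σ) * ((k : ℝ) + 1))) *
    (c + r ^ ((2 * (k : ℝ) + σ) / k)) ^ (-(((n : ℝ) - 2 * k) / (2 * (k : ℝ) + σ))))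

/-- the Bliss-type function `w_c` solves
`c_{n,k} r^{1-n}(r^{n-k}(w_c')^k)' = λ r^σ (-w_c)^{q*(k,σ)}` for all `r > 0`. -/
theorem bliss_function_solves (n k : ℕ) (hk : 1 ≤ k) (hn : 2 * k < n)
    (σ : ℝ) (hσ : 0 ≤ σ) (lam c : ℝ) (hlam : 0 < lam) (hc : 0 < c) :
    ∀ r : ℝ, 0 < r →
      cnk n k * r ^ (1 - (n : ℝ)) *
          deriv (fun s => s ^ ((n : ℝ) - k) * (deriv (wFun n k σ lam c) s) ^ k) r =
        lam * r ^ σ * (-(wFun n k σ lam c r)) ^ (qstar n k σ) := by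
  have hkn : k ≤ n := by omega
  have hk0 : (0:ℝ) < (k:ℝ) := by exact_mod_cast (by omega : 0 < k)
  have hn0 : (0:ℝ) < (n:ℝ) := by exact_mod_cast (by omega : 0 < n)
  have hnk : (0:ℝ) < (n:ℝ) - 2*(k:ℝ) := by
    have h : ((2*k : ℕ) : ℝ) < (n:ℝ) := by exact_mod_cast hn
    push_cast at h
    linarith
  have h2k : (0:ℝ) < 2*(k:ℝ) + σ := by linarith
  have hns : (0:ℝ) < (n:ℝ) + σ := by linarith
  have hk1 : (0:ℝ) < (k:ℝ) + 1 := by linarith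
  have hch : (0:ℝ) < (n.choose k : ℝ) := by exact_mod_cast Nat.choose_pos hkn
  intro r hr
  unfold wFun
  simp only [neg_neg]
  set p : ℝ := (2*(k:ℝ)+σ)/(k:ℝ) with hpdef
  set m : ℝ := ((n:ℝ)-2*(k:ℝ))/(2*(k:ℝ)+σ) with hmdef
  set al : ℝ := ((n:ℝ)-2*(k:ℝ))/((2*(k:ℝ)+σ)*((k:ℝ)+1)) with haldef
  set B : ℝ := c * (n.choose k : ℝ) * (((n:ℝ)+σ)/(n:ℝ)) * (((n:ℝ)-2*(k:ℝ))/(k:ℝ))^k with hBdef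
  set A : ℝ := lam ^ (-al) * B ^ al with hAdef
  set q : ℝ := qstar n k σ with hqdef
  set E2 : ℝ := (-m-1)*(k:ℝ) with hE2def
  have hB : (0:ℝ) < B := by
    rw [hBdef]
    exact mul_pos (mul_pos (mul_pos hc hch) (div_pos hns hn0)) (pow_pos (div_pos hnk hk0) k)
  have hA : (0:ℝ) < A := by
    rw [hAdef]
    exact mul_pos (Real.rpow_pos_of_pos hlam _) (Real.rpow_pos_of_pos hB _)
  set Ck : ℝ := A ^ k * (m*p) ^ k with hCkdef
  clear_value Ck
  clear_value A
  clear_value p m al B q E2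
  have hW : ∀ s : ℝ, 0 < s →
      HasDerivAt (fun x : ℝ => -(A * (c + x ^ p) ^ (-m)))
        (A * (m * p * s ^ (p-1) * (c + s ^ p) ^ (-m-1))) s := by
    intro s hs
    have hcs : (0:ℝ) < c + s ^ p := by positivity
    have h1 : HasDerivAt (fun x : ℝ => c + x ^ p) (p * s ^ (p-1)) s :=
      (Real.hasDerivAt_rpow_const (Or.inl hs.ne')).const_add c
    have h2 : HasDerivAt (fun z : ℝ => z ^ (-m)) (-m * (c + s^p) ^ (-m-1)) (c + s^p) :=
      Real.hasDerivAt_rpow_const (Or.inl hcs.ne')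
    have h3 : HasDerivAt (fun x : ℝ => (c + x ^ p) ^ (-m))
        (-m * (c + s^p) ^ (-m-1) * (p * s ^ (p-1))) s := by
      have := h2.comp s h1; exact this
    have h4 : HasDerivAt (fun x : ℝ => -(A * (c + x ^ p) ^ (-m))) _ s := (HasDerivAt.const_mul A h3).neg
    convert h4 using 1
    ring
  have hFG : (fun s : ℝ => s ^ ((n:ℝ) - (k:ℝ)) * (deriv (fun x : ℝ => -(A * (c + x ^ p) ^ (-m))) s) ^ k)
      =ᶠ[nhds r] (fun s : ℝ => Ck * (s ^ ((n:ℝ)+σ) * (c + s ^ p) ^ E2)) := by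
    filter_upwards [isOpen_Ioi.mem_nhds hr] with s hs
    have hs0 : (0:ℝ) < s := hs
    have hcs : (0:ℝ) < c + s ^ p := by positivity
    rw [(hW s hs0).deriv]
    have e1 : (s ^ (p-1)) ^ k = s ^ ((p-1)*(k:ℝ)) := by
      rw [← Real.rpow_natCast (s ^ (p-1)) k, ← Real.rpow_mul hs0.le]
    have e2 : ((c + s^p) ^ (-m-1)) ^ k = (c + s^p) ^ ((-m-1)*(k:ℝ)) := by
      rw [← Real.rpow_natCast ((c + s^p) ^ (-m-1)) k, ← Real.rpow_mul hcs.le]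
    calc s ^ ((n:ℝ) - (k:ℝ)) * (A * (m * p * s ^ (p-1) * (c + s^p) ^ (-m-1))) ^ k
        = (A ^ k * (m*p) ^ k) * (s ^ ((n:ℝ)-(k:ℝ)) * (s ^ (p-1)) ^ k * ((c + s^p) ^ (-m-1)) ^ k) := by
          ring
      _ = (A ^ k * (m*p) ^ k) * (s ^ ((n:ℝ)-(k:ℝ)) * s ^ ((p-1)*(k:ℝ)) * (c + s^p) ^ ((-m-1)*(k:ℝ))) := by
          rw [e1, e2]
      _ = (A ^ k * (m*p) ^ k) * (s ^ ((n:ℝ)+σ) * (c + s^p) ^ ((-m-1)*(k:ℝ))) := by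
          rw [← Real.rpow_add hs0,
            show (n:ℝ)-(k:ℝ)+(p-1)*(k:ℝ) = (n:ℝ)+σ from by rw [hpdef]; field_simp; ring]
      _ = Ck * (s ^ ((n:ℝ)+σ) * (c + s ^ p) ^ E2) := by
          rw [hCkdef, hE2def]
  have hcr : (0:ℝ) < c + r ^ p := by positivity
  have hGd : HasDerivAt (fun s : ℝ => Ck * (s ^ ((n:ℝ)+σ) * (c + s ^ p) ^ E2))
      (Ck * (((n:ℝ)+σ) * r ^ ((n:ℝ)+σ-1) * ((c + r^p) ^ E2) +
        r ^ ((n:ℝ)+σ) * (E2 * (c + r^p) ^ (E2-1) * (p * r ^ (p-1))))) r := by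
    have h1 : HasDerivAt (fun s:ℝ => s ^ ((n:ℝ)+σ)) (((n:ℝ)+σ) * r ^ ((n:ℝ)+σ-1)) r :=
      Real.hasDerivAt_rpow_const (Or.inl hr.ne')
    have ha : HasDerivAt (fun x:ℝ => c + x ^ p) (p * r ^ (p-1)) r :=
      (Real.hasDerivAt_rpow_const (Or.inl hr.ne')).const_add c
    have h2 : HasDerivAt (fun s:ℝ => (c + s ^ p) ^ E2)
        (E2 * (c + r^p) ^ (E2-1) * (p * r ^ (p-1))) r :=
      by have := (Real.hasDerivAt_rpow_const (p := E2) (Or.inl hcr.ne')).comp r ha; exact this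
    exact HasDerivAt.const_mul Ck (h1.mul h2)
  have hD := hFG.deriv_eq.trans hGd.deriv
  rw [hD]
  set y : ℝ := c + r ^ p with hydef
  have hy : (0:ℝ) < y := hcr
  have hyE : y ^ E2 = y ^ (E2-1) * y := by
    rw [show E2 = E2 - 1 + 1 from by ring, Real.rpow_add_one hy.ne']
    ring_nf
  have hr1 : r ^ (1-(n:ℝ)) * r ^ ((n:ℝ)+σ-1) = r ^ σ := by
    rw [← Real.rpow_add hr]
    congr 1
    ring
  have hr2 : r ^ (1-(n:ℝ)) * r ^ ((n:ℝ)+σ) * r ^ (p-1) = r ^ σ * r ^ p := by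
    rw [← Real.rpow_add hr, ← Real.rpow_add hr, ← Real.rpow_add hr]
    congr 1
    ring
  have hRq : (A * y ^ (-m)) ^ q = A ^ q * y ^ (-m * q) := by
    rw [Real.mul_rpow hA.le (Real.rpow_nonneg hy.le _), ← Real.rpow_mul hy.le]
  have hexp : -m * q = E2 - 1 := by
    rw [hE2def, hqdef, hmdef]
    unfold qstar
    field_simp
    ring
  have hE2p : E2 * p = -((n:ℝ)+σ) := by
    rw [hE2def, hpdef, hmdef]
    field_simp
    ring
  have halqk : al * (q - (k:ℝ)) = 1 := by
    rw [haldef, hqdef]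
    unfold qstar
    field_simp
    ring
  have hAqk : A ^ (q - (k:ℝ)) = B / lam := by
    rw [hAdef, Real.mul_rpow (Real.rpow_nonneg hlam.le _) (Real.rpow_nonneg hB.le _),
      ← Real.rpow_mul hlam.le, ← Real.rpow_mul hB.le, neg_mul, halqk, Real.rpow_neg_one,
      Real.rpow_one]
    ring
  have hAq : lam * A ^ q = A ^ k * B := by
    rw [show A ^ q = A ^ ((k:ℝ) + (q - (k:ℝ))) from by norm_num,
      Real.rpow_add hA, Real.rpow_natCast, hAqk]
    field_simp
  have hmp : m * p = ((n:ℝ)-2*(k:ℝ))/(k:ℝ) := by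
    rw [hmdef, hpdef]
    field_simp
  have hconst : cnk n k * Ck * ((n:ℝ)+σ) * c = lam * A ^ q := by
    rw [hAq, hCkdef, hmp, hBdef]
    unfold cnk
    ring
  rw [hyE, hRq, hexp]
  linear_combination (cnk n k * Ck * ((n:ℝ)+σ) * y ^ (E2-1) * y) * hr1
    + (cnk n k * Ck * E2 * p * y ^ (E2-1)) * hr2
    + (cnk n k * Ck * y ^ (E2-1) * r ^ σ * r ^ p) * hE2p
    + (cnk n k * Ck * ((n:ℝ)+σ) * y ^ (E2-1) * r ^ σ) * hydef
    + (r ^ σ * y ^ (E2-1)) * hconst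
end
end

section
/- Assume n > 2k + 8 + 4σ/k. Define f_{k,σ}(q) = 2q(2k+σ)/(k(q-k)) + (2(2k+σ)/k)·√(q/(q-k)) + (2k+σ)(k-1)/(q-k) for q > k. Then q_JL(k,σ) satisfies the equation n - 2k = f_{k,σ}(q_JL(k,σ)), and moreover q*(k,σ) < q_JL(k,σ). -/
open Real Set Filter MeasureTheory

noncomputable section

set_option maxHeartbeats 1000000 in
lemma qJL_aux (K N σ D q : ℝ) (hK1 : 1 ≤ K) (hσ : 0 ≤ σ)
    (hM : 2*K^2 + 8*K + 4*σ < K*N)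
    (hD0 : 0 ≤ D)
    (hD2 : D^2 = K*(2*K+σ)*((K+1)*N - K*(2-σ)))
    (hq : q = K * ((K*(K+1)*N - K^2*(2-σ) + 2*K + σ - 2*D) /
      (K*(K+1)*N - 2*K^2*(K+3) - 2*K*σ - 2*D))) :
    N - 2*K = 2*q*(2*K+σ)/(K*(q-K)) + 2*(2*K+σ)/K * Real.sqrt (q/(q-K))
        + (2*K+σ)*(K-1)/(q-K) ∧
    ((N+2)*K + σ*(K+1))/(N-2*K) < q := by
  have hK0 : (0:ℝ) < K := by linarith
  have hc : (0:ℝ) < 2*K+σ := by linarith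
  have hKc : (0:ℝ) < (K+1)*(2*K+σ) := by positivity
  have hN2K : (0:ℝ) < N - 2*K := by nlinarith
  have hDgt : (K+2)*(2*K+σ) < D := by
    have hfac : D^2 - ((K+2)*(2*K+σ))^2
        = (2*K+σ)*(K+1)*(K*N - 2*K^2 - 8*K - 4*σ) := by rw [hD2]; ring
    have hprod : 0 < (2*K+σ)*(K+1)*(K*N - 2*K^2 - 8*K - 4*σ) :=
      mul_pos (mul_pos hc (by linarith)) (by linarith)
    nlinarith [hfac, hprod, hD0, mul_pos (show (0:ℝ) < K+2 by linarith) hc]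
  have hDpos : 0 < D := lt_trans (mul_pos (by linarith) hc) hDgt
  have hBD : 2*D < K*(K+1)*N - 2*K^2*(K+3) - 2*K*σ := by
    have hBpos : 0 < K*(K+1)*N - 2*K^2*(K+3) - 2*K*σ := by
      nlinarith [mul_lt_mul_of_pos_left hM (show (0:ℝ) < K+1 by linarith)]
    have hfac : (K*(K+1)*N - 2*K^2*(K+3) - 2*K*σ)^2 - 4*D^2
        = (K+1)^2 * (K*N-2*K^2-8*K-4*σ) * ((K*N-2*K^2-8*K-4*σ) + 4*(2*K+σ)) := by
      rw [hD2]; ring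
    have hprod : 0 < (K+1)^2 * (K*N-2*K^2-8*K-4*σ) * ((K*N-2*K^2-8*K-4*σ) + 4*(2*K+σ)) :=
      mul_pos (mul_pos (by positivity) (by linarith)) (by linarith)
    nlinarith [hfac, hprod, hBpos, hD0]
  have hBne : K*(K+1)*N - 2*K^2*(K+3) - 2*K*σ - 2*D ≠ 0 := by
    intro h; nlinarith
  obtain ⟨t, htmul⟩ : ∃ t, ((K+1)*(2*K+σ))*t = D - (2*K+σ) :=
    ⟨(D - (2*K+σ))/((K+1)*(2*K+σ)), by field_simp⟩
  have ht1 : 1 < t := by nlinarith [htmul, hDgt, hKc]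
  have ht0 : 0 < t := by linarith
  have htsq : 0 < t^2 - 1 := by nlinarith
  have htsqne : t^2 - 1 ≠ 0 := ne_of_gt htsq
  have hdenne : (D-(K+2)*(2*K+σ))*(D+K*(2*K+σ)) ≠ 0 :=
    ne_of_gt (mul_pos (by linarith) (by nlinarith [mul_pos hK0 hc]))
  have h1 : (K*(K+1)*N - K^2*(2-σ) + 2*K + σ - 2*D) * ((D-(K+2)*(2*K+σ))*(D+K*(2*K+σ)))
      = (D-(2*K+σ))^2 * (K*(K+1)*N - 2*K^2*(K+3) - 2*K*σ - 2*D) := by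
    linear_combination ((K+1)^2*(2*K+σ))*hD2
  have h2 : (K*(K+1)*N - K^2*(2-σ) + 2*K + σ - 2*D) /
      (K*(K+1)*N - 2*K^2*(K+3) - 2*K*σ - 2*D)
      = (D-(2*K+σ))^2/((D-(K+2)*(2*K+σ))*(D+K*(2*K+σ))) := by
    rw [div_eq_div_iff hBne hdenne]; linear_combination h1
  have h4 : (D-(2*K+σ))^2 = ((K+1)*(2*K+σ))^2 * t^2 := by
    linear_combination (-(((K+1)*(2*K+σ))*t + D - (2*K+σ))) * htmul
  have h3 : (D-(K+2)*(2*K+σ))*(D+K*(2*K+σ)) = ((K+1)*(2*K+σ))^2 * (t^2-1) := by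
    linear_combination (-(((K+1)*(2*K+σ))*t + D - (2*K+σ))) * htmul
  have hqt : q = K*t^2/(t^2-1) := by
    rw [hq, h2, h4, h3, mul_div_mul_left _ _ (by positivity : ((K+1)*(2*K+σ))^2 ≠ 0),
      mul_div_assoc]
  have hqK : q - K = K/(t^2-1) := by
    rw [hqt]; field_simp; ring
  have hqdiv : q/(q-K) = t^2 := by
    rw [hqK, hqt]; field_simp
  have hsqrt : Real.sqrt (q/(q-K)) = t := by
    rw [hqdiv]; exact Real.sqrt_sq ht0.le
  have hteq0 : ((K+1)*(2*K+σ))*((2*K+σ)*((K+1)*t^2 + 2*t - (K-1)))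
      = ((K+1)*(2*K+σ))*(K*(N-2*K)) := by
    linear_combination ((K+1)*(2*K+σ)*t + D + (2*K+σ)) * htmul + hD2
  have hteq : (2*K+σ)*((K+1)*t^2 + 2*t - (K-1)) = K*(N-2*K) :=
    mul_left_cancel₀ (ne_of_gt hKc) hteq0
  constructor
  · rw [hsqrt, hqK, hqt]
    field_simp
    linear_combination (-1) * hteq
  · have hqs : ((N+2)*K + σ*(K+1))/(N-2*K) = K + (K+1)*(2*K+σ)/(N-2*K) := by
      field_simp; ring
    have hq2 : q = K + K/(t^2-1) := by
      rw [hqt]; field_simp; ring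
    rw [hqs, hq2]
    have : (K+1)*(2*K+σ)/(N-2*K) < K/(t^2-1) := by
      rw [div_lt_div_iff₀ hN2K htsq]
      nlinarith [hteq, mul_pos hc ht0, hc]
    linarith

/-- for `n > 2k + 8 + 4σ/k`, the exponent `q_JL(k,σ)` solves
`n - 2k = f_{k,σ}(q)` and satisfies `q*(k,σ) < q_JL(k,σ)`. -/
theorem qJL_characterization (n k : ℕ) (hk : 1 ≤ k) (hnk : 2 * k < n)
    (σ : ℝ) (hσ : 0 ≤ σ) (hn : 2 * (k : ℝ) + 8 + 4 * σ / k < n) :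
    (n : ℝ) - 2 * k =
      2 * qJL n k σ * (2 * (k : ℝ) + σ) / ((k : ℝ) * (qJL n k σ - k)) +
        2 * (2 * (k : ℝ) + σ) / k * Real.sqrt (qJL n k σ / (qJL n k σ - k)) +
        (2 * (k : ℝ) + σ) * ((k : ℝ) - 1) / (qJL n k σ - k) ∧
    qstar n k σ < qJL n k σ := by
  have hK1 : (1:ℝ) ≤ (k:ℝ) := by exact_mod_cast hk
  have hK0 : (0:ℝ) < (k:ℝ) := by linarith
  have hM : 2*(k:ℝ)^2 + 8*(k:ℝ) + 4*σ < (k:ℝ)*(n:ℝ) := by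
    have h := mul_lt_mul_of_pos_left hn hK0
    have e : (k:ℝ) * (2*(k:ℝ) + 8 + 4*σ/(k:ℝ)) = 2*(k:ℝ)^2 + 8*(k:ℝ) + 4*σ := by
      field_simp
    nlinarith [h, e]
  have hEpos : 0 ≤ (k:ℝ) * (2*(k:ℝ)+σ) * (((k:ℝ)+1)*(n:ℝ) - (k:ℝ)*(2-σ)) := by
    have h9 : 0 < ((k:ℝ)+1)*(n:ℝ) - (k:ℝ)*(2-σ) := by
      nlinarith [mul_lt_mul_of_pos_left hM (show (0:ℝ) < (k:ℝ)+1 by linarith), hσ, hK1,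
        mul_nonneg hK0.le hσ]
    have h8 : (0:ℝ) < 2*(k:ℝ)+σ := by linarith
    positivity
  have hD2 : (Real.sqrt ((k:ℝ) * (2 * (k:ℝ) + σ) * (((k:ℝ) + 1) * (n:ℝ) - (k:ℝ) * (2 - σ))))^2
      = (k:ℝ)*(2*(k:ℝ)+σ)*(((k:ℝ)+1)*(n:ℝ) - (k:ℝ)*(2-σ)) := Real.sq_sqrt hEpos
  obtain ⟨h1, h2⟩ := qJL_aux (k:ℝ) (n:ℝ) σ _ (qJL n k σ) hK1 hσ hM (Real.sqrt_nonneg _) hD2 rfl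
  exact ⟨h1, h2⟩
end
end

section
/- Assume n > 2k + 8 + 4σ/k and q > q*(k,σ). With a_σ = q(n-2k) - (n+σ)k, define the discriminant Δ = (q-k)^{-2}·{[(2k+σ) - a_σ]² - 4·((2k+σ)(q-k)/k)·a_σ}. Then Δ ≥ 0 if and only if q ≥ q_JL(k,σ), and Δ < 0 if and only if q*(k,σ) < q < q_JL(k,σ). -/
open Real Set Filter MeasureTheory

noncomputable section

set_option maxHeartbeats 1600000 in
/-- Key real-variable lemma: sign of the discriminant numerator vs `q_JL`. -/
lemma disc_key (K N σ q : ℝ) (hK1 : 1 ≤ K) (hσ : 0 ≤ σ)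
    (hNK : 2 * K < N) (hn : 2 * K + 8 + 4 * σ / K < N)
    (hq : ((N + 2) * K + σ * (K + 1)) / (N - 2 * K) < q) :
    (0 ≤ ((2 * K + σ) - (q * (N - 2 * K) - (N + σ) * K)) ^ 2 -
        4 * ((2 * K + σ) * (q - K) / K) * (q * (N - 2 * K) - (N + σ) * K) ↔
      K * ((K * (K + 1) * N - K ^ 2 * (2 - σ) + 2 * K + σ -
            2 * Real.sqrt (K * (2 * K + σ) * ((K + 1) * N - K * (2 - σ)))) /
          (K * (K + 1) * N - 2 * K ^ 2 * (K + 3) - 2 * K * σ -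
            2 * Real.sqrt (K * (2 * K + σ) * ((K + 1) * N - K * (2 - σ))))) ≤ q) := by
  have hK : (0:ℝ) < K := lt_of_lt_of_le one_pos hK1
  have hm : 0 < N - 2 * K := by linarith
  set P : ℝ := 2 * K + σ with hPdef
  have hP : 0 < P := by simp only [hPdef]; linarith
  have hKN : 2 * K ^ 2 + 8 * K + 4 * σ < K * N := by
    have h4 : 4 * σ / K < N - 2 * K - 8 := by linarith
    have h5 : 4 * σ < (N - 2 * K - 8) * K := (div_lt_iff₀ hK).mp h4
    nlinarith
  set A : ℝ := K * (K + 1) * N - K ^ 2 * (2 - σ) + 2 * K + σ with hAdef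
  set B : ℝ := K * (K + 1) * N - 2 * K ^ 2 * (K + 3) - 2 * K * σ with hBdef
  set E : ℝ := (K + 1) * N - K * (2 - σ) with hEdef
  have hEpos : 0 < E := by
    simp only [hEdef]
    nlinarith [mul_pos hK hm, mul_nonneg hK.le hσ]
  have hArg : 0 ≤ K * P * E := by positivity
  set s : ℝ := Real.sqrt (K * P * E) with hsdef
  have hs0 : 0 ≤ s := Real.sqrt_nonneg _
  have hs2 : s ^ 2 = K * P * E := Real.sq_sqrt hArg
  -- positivity of the leading coefficient α
  set α : ℝ := (N - 2 * K) * (K * (N - 2 * K) - 4 * P) with hαdef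
  have hα : 0 < α := by
    simp only [hαdef, hPdef]
    have : 0 < K * (N - 2 * K) - 4 * (2 * K + σ) := by nlinarith
    exact mul_pos hm this
  clear_value P A B E s α
  -- B² - 4KPE > 0
  have h1 : 0 < K * ((K + 1) * N - (2 * K ^ 2 + 6 * K + 2 * σ)) - 2 * P * (K + 2) := by
    simp only [hPdef]; nlinarith
  have h2 : 0 < (K + 1) * N - 2 * K ^ 2 - 2 * K := by nlinarith [mul_pos hK hm]
  have hBs : 0 < B ^ 2 - 4 * (K * P * E) := by
    have hfact : B ^ 2 - 4 * (K * P * E) =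
        K * ((K * ((K + 1) * N - (2 * K ^ 2 + 6 * K + 2 * σ)) - 2 * P * (K + 2)) *
          (((K + 1) * N - (2 * K ^ 2 + 6 * K + 2 * σ)) + 2 * P)) := by
      simp only [hBdef, hEdef, hPdef]; ring
    rw [hfact]
    have h2' : 0 < ((K + 1) * N - (2 * K ^ 2 + 6 * K + 2 * σ)) + 2 * P := by
      simp only [hPdef]; nlinarith
    exact mul_pos hK (mul_pos h1 h2')
  have hB : 0 < B := by
    simp only [hBdef]
    nlinarith [mul_pos hP (show (0:ℝ) < K + 2 by linarith)]
  have hBs2 : 2 * s < B := by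
    have h : s < B / 2 := by
      rw [hsdef, Real.sqrt_lt' (by linarith : (0:ℝ) < B / 2)]
      have hB4 : (B / 2) ^ 2 = B ^ 2 / 4 := by ring
      linarith
    linarith
  have hden : 0 < B - 2 * s := by linarith
  -- q > K
  have hqm : ((N + 2) * K + σ * (K + 1)) < q * (N - 2 * K) := (div_lt_iff₀ hm).mp hq
  have hqK : K < q := by nlinarith [mul_pos hP (show (0:ℝ) < K + 1 by linarith)]
  -- positivity of the "plus branch" at q
  set num : ℝ := (N + 2) * K + σ * (K + 1) with hnumdef
  have hstarB : 0 < num * B - K * A * (N - 2 * K) + 2 * s * (num - K * (N - 2 * K)) := by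
    have hY : 0 < num - K * (N - 2 * K) := by
      simp only [hnumdef]; nlinarith [mul_pos hP (show (0:ℝ) < K + 1 by linarith)]
    have hident : α * ((num * B - K * A * (N - 2 * K)) ^ 2 -
        4 * (K * P * E) * (num - K * (N - 2 * K)) ^ 2) =
        -(4 * P ^ 3 * (K + 1) * (N - 2 * K) * (B ^ 2 - 4 * (K * P * E))) := by
      simp only [hαdef, hnumdef, hAdef, hBdef, hEdef, hPdef]; ring
    have hRHS : 0 < 4 * P ^ 3 * (K + 1) * (N - 2 * K) * (B ^ 2 - 4 * (K * P * E)) := by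
      have : (0:ℝ) < K + 1 := by linarith
      positivity
    have hGneg : (num * B - K * A * (N - 2 * K)) ^ 2 -
        4 * (K * P * E) * (num - K * (N - 2 * K)) ^ 2 < 0 := by
      by_contra h
      push_neg at h
      nlinarith [mul_nonneg hα.le h]
    -- from X² < (2sY)² with Y > 0, s ≥ 0 conclude X + 2sY > 0
    by_contra h
    push_neg at h
    have h1' : num * B - K * A * (N - 2 * K) ≤ -(2 * s * (num - K * (N - 2 * K))) := by
      linarith
    have h2' : num * B - K * A * (N - 2 * K) - 2 * s * (num - K * (N - 2 * K)) ≤ 0 := by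
      nlinarith [mul_nonneg hs0 hY.le]
    nlinarith [mul_nonneg (neg_nonneg.mpr h2')
      (neg_nonneg.mpr (by linarith : num * B - K * A * (N - 2 * K) +
        2 * s * (num - K * (N - 2 * K)) ≤ 0)), hs2]
  have hplus : 0 < q * B - K * A + 2 * s * (q - K) := by
    have hdiff : (N - 2 * K) * (q * B - K * A + 2 * s * (q - K)) =
        (num * B - K * A * (N - 2 * K) + 2 * s * (num - K * (N - 2 * K))) +
        (q * (N - 2 * K) - num) * (B + 2 * s) := by ring
    have hBp : 0 < B + 2 * s := by linarith
    have hq2 : 0 < (q * (N - 2 * K) - num) * (B + 2 * s) :=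
      mul_pos (by simp only [hnumdef]; linarith) hBp
    nlinarith [hstarB, hm]
  -- the main identity
  set a : ℝ := q * (N - 2 * K) - (N + σ) * K with hadef
  clear_value a
  have hKF : K * ((P - a) ^ 2 - 4 * (P * (q - K) / K) * a) =
      K * (P - a) ^ 2 - 4 * P * (q - K) * a := by
    field_simp
  have hident : (K * (P - a) ^ 2 - 4 * P * (q - K) * a) * (B ^ 2 - 4 * (K * P * E)) =
      α * ((q * B - K * A) ^ 2 - 4 * (K * P * E) * (q - K) ^ 2) := by
    simp only [hαdef, hadef, hAdef, hBdef, hEdef, hPdef]; ring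
  have hs2' : (2 * s * (q - K)) ^ 2 = 4 * (K * P * E) * (q - K) ^ 2 := by
    have h' : (2 * s * (q - K)) ^ 2 = 4 * s ^ 2 * (q - K) ^ 2 := by ring
    rw [h', hs2]
  have hqJL : K * ((A - 2 * s) / (B - 2 * s)) ≤ q ↔
      2 * s * (q - K) ≤ q * B - K * A := by
    rw [mul_div_assoc', div_le_iff₀ hden]
    constructor <;> intro h <;> nlinarith [h]
  constructor
  · intro hF
    have hKF0 : 0 ≤ K * (P - a) ^ 2 - 4 * P * (q - K) * a := by
      rw [← hKF]; exact mul_nonneg hK.le hF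
    have h3 : 0 ≤ α * ((q * B - K * A) ^ 2 - 4 * (K * P * E) * (q - K) ^ 2) := by
      rw [← hident]; exact mul_nonneg hKF0 hBs.le
    have hQ : 0 ≤ (q * B - K * A) ^ 2 - 4 * (K * P * E) * (q - K) ^ 2 :=
      le_of_mul_le_mul_left (by simpa using h3) hα
    have h2s : 2 * s * (q - K) ≤ q * B - K * A := by
      by_contra h
      push_neg at h
      have hlt : 0 < 2 * s * (q - K) - (q * B - K * A) := by linarith
      nlinarith [mul_pos hlt hplus, hQ, hs2']
    exact hqJL.mpr h2s
  · intro hJL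
    have h2s : 2 * s * (q - K) ≤ q * B - K * A := hqJL.mp hJL
    have h2s0 : 0 ≤ 2 * s * (q - K) := by
      have hx : (0:ℝ) ≤ q - K := by linarith
      positivity
    have hsq : (2 * s * (q - K)) ^ 2 ≤ (q * B - K * A) ^ 2 :=
      pow_le_pow_left₀ h2s0 h2s 2
    have hQ : 0 ≤ (q * B - K * A) ^ 2 - 4 * (K * P * E) * (q - K) ^ 2 := by
      linarith [hsq, hs2']
    have h3 : 0 ≤ (K * (P - a) ^ 2 - 4 * P * (q - K) * a) * (B ^ 2 - 4 * (K * P * E)) := by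
      rw [hident]; exact mul_nonneg hα.le hQ
    have hKF0 : 0 ≤ K * (P - a) ^ 2 - 4 * P * (q - K) * a :=
      le_of_mul_le_mul_right (by simpa using h3) hBs
    have h4 : 0 ≤ K * ((P - a) ^ 2 - 4 * (P * (q - K) / K) * a) := by
      rw [hKF]; exact hKF0
    exact le_of_mul_le_mul_left (by simpa using h4) hK

/-- for `n > 2k+8+4σ/k` and `q > q*(k,σ)`, the discriminant
`Δ = (q-k)^{-2}{[(2k+σ)-a_σ]² - 4((2k+σ)(q-k)/k)a_σ}` of the Jacobian at `(x̂,ŷ)` is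
nonnegative iff `q ≥ q_JL(k,σ)` and negative iff `q*(k,σ) < q < q_JL(k,σ)`. -/
theorem discriminant_sign (n k : ℕ) (hk : 1 ≤ k) (hnk : 2 * k < n)
    (q σ : ℝ) (hσ : 0 ≤ σ) (hn : 2 * (k : ℝ) + 8 + 4 * σ / k < n)
    (hq : qstar n k σ < q) :
    (0 ≤ (q - (k : ℝ)) ^ (-2 : ℤ) *
        (((2 * (k : ℝ) + σ) - (q * ((n : ℝ) - 2 * k) - ((n : ℝ) + σ) * k)) ^ 2 -
          4 * ((2 * (k : ℝ) + σ) * (q - k) / k) *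
            (q * ((n : ℝ) - 2 * k) - ((n : ℝ) + σ) * k)) ↔
      qJL n k σ ≤ q) ∧
    ((q - (k : ℝ)) ^ (-2 : ℤ) *
        (((2 * (k : ℝ) + σ) - (q * ((n : ℝ) - 2 * k) - ((n : ℝ) + σ) * k)) ^ 2 -
          4 * ((2 * (k : ℝ) + σ) * (q - k) / k) *
            (q * ((n : ℝ) - 2 * k) - ((n : ℝ) + σ) * k)) < 0 ↔
      (qstar n k σ < q ∧ q < qJL n k σ)) := by
  have hK1 : (1:ℝ) ≤ (k:ℝ) := by exact_mod_cast hk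
  have hNK : 2 * (k:ℝ) < (n:ℝ) := by exact_mod_cast hnk
  have hq' : (((n:ℝ) + 2) * k + σ * ((k:ℝ) + 1)) / ((n:ℝ) - 2 * k) < q := hq
  have key := disc_key (k:ℝ) (n:ℝ) σ q hK1 hσ hNK hn hq'
  have hm : (0:ℝ) < (n:ℝ) - 2 * k := by linarith
  have hqK : (k:ℝ) < q := by
    have hqm := (div_lt_iff₀ hm).mp hq'
    nlinarith [mul_pos (show (0:ℝ) < 2 * (k:ℝ) + σ by linarith)
      (show (0:ℝ) < (k:ℝ) + 1 by linarith)]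
  have hpow : (q - (k:ℝ)) ^ (-2:ℤ) = ((q - (k:ℝ)) ^ 2)⁻¹ := by
    rw [zpow_neg]
    norm_cast
  have hne : q - (k:ℝ) ≠ 0 := ne_of_gt (by linarith : (0:ℝ) < q - (k:ℝ))
  have hcpos : (0:ℝ) < ((q - (k:ℝ)) ^ 2)⁻¹ := by positivity
  have hmul : ∀ X : ℝ, (0 ≤ ((q - (k:ℝ)) ^ 2)⁻¹ * X ↔ 0 ≤ X) := fun X =>
    ⟨fun h => le_of_mul_le_mul_left (by simpa using h) hcpos,
     fun h => mul_nonneg hcpos.le h⟩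
  have hmul' : ∀ X : ℝ, (((q - (k:ℝ)) ^ 2)⁻¹ * X < 0 ↔ X < 0) := fun X => by
    rw [← not_le, ← not_le, not_iff_not]
    exact hmul X
  rw [hpow, hmul, hmul']
  have part1 : (0 ≤ ((2 * (k : ℝ) + σ) - (q * ((n : ℝ) - 2 * k) - ((n : ℝ) + σ) * k)) ^ 2 -
          4 * ((2 * (k : ℝ) + σ) * (q - k) / k) *
            (q * ((n : ℝ) - 2 * k) - ((n : ℝ) + σ) * k)) ↔
      qJL n k σ ≤ q := key
  constructor
  · exact part1
  · constructor
    · intro h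
      refine ⟨hq, ?_⟩
      by_contra hh
      push_neg at hh
      have := part1.mpr hh
      linarith
    · rintro ⟨-, h2⟩
      by_contra hh
      push_neg at hh
      have := part1.mp hh
      linarith
end
end

section
/- Let q ≥ q*(k,σ), let λ̄ > 0, and let v ∈ C²((0,∞)) ∩ C¹([0,∞)) be the unique global solution of (s^{n-k}(v'(s))^k)' = λ̄ s^{n-1+σ} (-v(s))^q for s > 0 with v(0) = -1 and v'(0) = 0. Then lim_{r→0⁺} r·v'(r)/(-v(r)) = 0 and lim_{r→0⁺} λ̄ r^{k+σ}(-v(r))^q/(v'(r))^k = n + σ; equivalently, the transformed orbit x(t) = λ̄ e^{(k+σ)t}(-v(e^t))^q/(v'(e^t))^k, y(t) = e^t v'(e^t)/(-v(e^t)) satisfies lim_{t→-∞}(x(t), y(t)) = (n+σ, 0). -/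
open Real Set Filter MeasureTheory

open scoped Topology

noncomputable section

/-- for `q ≥ q*(k,σ)` the (unique, global, negative) solution `v` of
`(s^{n-k}(v')^k)' = λ̄ s^{n-1+σ}(-v)^q`, `v(0) = -1`, `v'(0) = 0`, satisfies
`r v'(r)/(-v(r)) → 0` and `λ̄ r^{k+σ}(-v(r))^q/(v'(r))^k → n+σ` as `r → 0⁺`;
equivalently, the transformed orbit `(x(t),y(t))` tends to `(n+σ,0)` as `t → -∞`. -/
theorem orbit_starts_at_corner (n k : ℕ) (hk : 1 ≤ k) (hn : 2 * k < n)
    (q σ lam : ℝ) (hq : (k : ℝ) < q) (hσ : 0 ≤ σ) (hlam : 0 < lam)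
    (hqstar : qstar n k σ ≤ q) (v : ℝ → ℝ)
    (hreg2 : ContDiffOn ℝ 2 v (Ioi 0)) (hreg1 : ContDiffOn ℝ 1 v (Ici 0))
    (hv0 : v 0 = -1) (hv'0 : deriv v 0 = 0)
    (hneg : ∀ s : ℝ, 0 ≤ s → v s < 0)
    (heq : ∀ s : ℝ, 0 < s →
      deriv (fun τ => τ ^ ((n : ℝ) - k) * (deriv v τ) ^ k) s =
        lam * s ^ ((n : ℝ) - 1 + σ) * (-v s) ^ q) :
    Tendsto (fun r => r * deriv v r / (-v r)) (nhdsWithin 0 (Ioi 0)) (nhds 0) ∧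
    Tendsto (fun r => lam * r ^ ((k : ℝ) + σ) * (-v r) ^ q / (deriv v r) ^ k)
      (nhdsWithin 0 (Ioi 0)) (nhds ((n : ℝ) + σ)) ∧
    Tendsto (fun t =>
        (lam * Real.exp (((k : ℝ) + σ) * t) * (-v (Real.exp t)) ^ q /
            (deriv v (Real.exp t)) ^ k,
          Real.exp t * deriv v (Real.exp t) / (-v (Real.exp t))))
      atBot (nhds ((n : ℝ) + σ, 0)) := by
  classical
  have hk1 : (1:ℝ) ≤ (k:ℝ) := by exact_mod_cast hk
  have hkn : 2*(k:ℝ) < (n:ℝ) := by exact_mod_cast hn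
  have hNk : (0:ℝ) < (n:ℝ) - (k:ℝ) := by linarith
  have hNσ : (0:ℝ) < (n:ℝ) + σ := by linarith
  have hN1σ : (0:ℝ) < (n:ℝ) - 1 + σ := by linarith
  have hkσ : (0:ℝ) < (k:ℝ) + σ := by linarith
  have hkne : (k:ℝ) ≠ 0 := by positivity
  set g : ℝ → ℝ := fun τ => τ ^ ((n : ℝ) - k) * (deriv v τ) ^ k with hgdef
  -- continuity of v at 0 from the right
  have hvc : ContinuousOn v (Ici 0) := hreg1.continuousOn
  have hvt : Tendsto v (𝓝[>] (0:ℝ)) (𝓝 (-1)) := by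
    have h := (hvc 0 self_mem_Ici).tendsto
    rw [hv0] at h
    exact h.mono_left (nhdsWithin_mono _ Ioi_subset_Ici_self)
  have hvq : Tendsto (fun r => (-v r) ^ q) (𝓝[>] (0:ℝ)) (𝓝 1) := by
    have hc : ContinuousAt (fun z : ℝ => (-z) ^ q) (-1) :=
      ContinuousAt.rpow_const (continuousAt_id.neg) (Or.inl (by norm_num))
    have h := hc.tendsto.comp hvt
    simpa [Function.comp_def, Real.one_rpow] using h
  -- differentiability of deriv v on (0,∞)
  have hdv : ∀ s : ℝ, 0 < s → DifferentiableAt ℝ (deriv v) s := by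
    have h1 : ContDiffOn ℝ 1 (deriv v) (Ioi 0) :=
      hreg2.deriv_of_isOpen isOpen_Ioi (by norm_num)
    intro s hs
    exact (h1.differentiableOn one_ne_zero).differentiableAt (isOpen_Ioi.mem_nhds hs)
  -- g has the given derivative on (0,1)
  have hgd : ∀ s ∈ Ioo (0:ℝ) 1,
      HasDerivAt g (lam * s ^ ((n:ℝ) - 1 + σ) * (-v s) ^ q) s := by
    intro s hs
    have hs0 : 0 < s := hs.1
    have hda : DifferentiableAt ℝ g s := by
      have h1 : DifferentiableAt ℝ (fun τ : ℝ => τ ^ ((n:ℝ) - (k:ℝ))) s :=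
        Real.differentiableAt_rpow_const_of_ne _ hs0.ne'
      exact h1.mul ((hdv s hs0).pow k)
    have h := hda.hasDerivAt
    rwa [heq s hs0] at h
  -- g tends to 0 at 0⁺
  have hg0 : Tendsto g (𝓝[>] (0:ℝ)) (𝓝 0) := by
    have hw : ContinuousOn (derivWithin v (Ici 0)) (Ici 0) :=
      hreg1.continuousOn_derivWithin (uniqueDiffOn_Ici 0) le_rfl
    have hG : ContinuousOn
        (fun s : ℝ => s ^ ((n:ℝ) - (k:ℝ)) * (derivWithin v (Ici 0) s) ^ k) (Ici 0) :=
      (continuousOn_id.rpow_const (fun x _ => Or.inr hNk.le)).mul (hw.pow k)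
    have hG0 : Tendsto (fun s : ℝ => s ^ ((n:ℝ) - (k:ℝ)) * (derivWithin v (Ici 0) s) ^ k)
        (𝓝[>] (0:ℝ)) (𝓝 0) := by
      have h := (hG 0 self_mem_Ici).tendsto
      rw [show ((0:ℝ) ^ ((n:ℝ) - (k:ℝ)) * (derivWithin v (Ici 0) 0) ^ k) = 0 by
        rw [Real.zero_rpow hNk.ne', zero_mul]] at h
      exact h.mono_left (nhdsWithin_mono _ Ioi_subset_Ici_self)
    refine hG0.congr' ?_
    filter_upwards [self_mem_nhdsWithin] with s hs
    have : derivWithin v (Ici 0) s = deriv v s :=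
      derivWithin_of_mem_nhds (Ici_mem_nhds hs)
    simp [hgdef, this]
  -- denominator for L'Hôpital
  have hφd : ∀ x ∈ Ioo (0:ℝ) 1,
      HasDerivAt (fun r : ℝ => r ^ ((n:ℝ)+σ)) (((n:ℝ)+σ) * x ^ ((n:ℝ)+σ-1)) x :=
    fun x hx => Real.hasDerivAt_rpow_const (Or.inl hx.1.ne')
  have hφ'ne : ∀ x ∈ Ioo (0:ℝ) 1, ((n:ℝ)+σ) * x ^ ((n:ℝ)+σ-1) ≠ 0 := by
    intro x hx
    have := Real.rpow_pos_of_pos hx.1 ((n:ℝ)+σ-1)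
    positivity
  have hrpow0 : ∀ c : ℝ, 0 < c →
      Tendsto (fun r : ℝ => r ^ c) (𝓝[>] (0:ℝ)) (𝓝 0) := by
    intro c hc
    have h := (Real.continuousAt_rpow_const 0 c (Or.inr hc.le)).tendsto
    rw [Real.zero_rpow hc.ne'] at h
    exact h.mono_left nhdsWithin_le_nhds
  have hφ0 : Tendsto (fun r : ℝ => r ^ ((n:ℝ)+σ)) (𝓝[>] (0:ℝ)) (𝓝 0) := hrpow0 _ hNσ
  have hdiv : Tendsto (fun x : ℝ =>
      (lam * x ^ ((n:ℝ) - 1 + σ) * (-v x) ^ q) / (((n:ℝ)+σ) * x ^ ((n:ℝ)+σ-1)))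
      (𝓝[>] (0:ℝ)) (𝓝 (lam / ((n:ℝ)+σ))) := by
    have hbase : Tendsto (fun x : ℝ => lam * (-v x) ^ q / ((n:ℝ)+σ))
        (𝓝[>] (0:ℝ)) (𝓝 (lam / ((n:ℝ)+σ))) := by
      have h := (hvq.const_mul lam).div_const ((n:ℝ)+σ)
      simpa using h
    refine hbase.congr' ?_
    filter_upwards [self_mem_nhdsWithin] with x hx
    have hexp : (n:ℝ) - 1 + σ = (n:ℝ) + σ - 1 := by ring
    have hx0 : x ^ ((n:ℝ)+σ-1) ≠ 0 := (Real.rpow_pos_of_pos hx ((n:ℝ)+σ-1)).ne'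
    rw [hexp]
    field_simp
  -- L'Hôpital: g r / r^{n+σ} → lam/(n+σ)
  have hE : Tendsto (fun r => g r / r ^ ((n:ℝ)+σ)) (𝓝[>] (0:ℝ)) (𝓝 (lam / ((n:ℝ)+σ))) :=
    HasDerivAt.lhopital_zero_right_on_Ioo one_pos hgd hφd hφ'ne hg0 hφ0 hdiv
  -- ratio (deriv v)^k / r^{k+σ} → lam/(n+σ)
  have hR : Tendsto (fun r => (deriv v r) ^ k / r ^ ((k:ℝ)+σ))
      (𝓝[>] (0:ℝ)) (𝓝 (lam / ((n:ℝ)+σ))) := by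
    refine hE.congr' ?_
    filter_upwards [self_mem_nhdsWithin] with r hr
    have h1 : r ^ ((n:ℝ)+σ) = r ^ ((n:ℝ)-(k:ℝ)) * r ^ ((k:ℝ)+σ) := by
      rw [← Real.rpow_add hr]; ring_nf
    have h2 : r ^ ((n:ℝ)-(k:ℝ)) ≠ 0 := (Real.rpow_pos_of_pos hr _).ne'
    show g r / r ^ ((n:ℝ)+σ) = (deriv v r) ^ k / r ^ ((k:ℝ)+σ)
    rw [hgdef]
    simp only
    rw [h1, mul_div_mul_left _ _ h2]
  -- (deriv v)^k → 0
  have hDk : Tendsto (fun r => (deriv v r) ^ k) (𝓝[>] (0:ℝ)) (𝓝 0) := by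
    have h := hR.mul (hrpow0 _ hkσ)
    rw [mul_zero] at h
    refine h.congr' ?_
    filter_upwards [self_mem_nhdsWithin] with r hr
    exact div_mul_cancel₀ _ (Real.rpow_pos_of_pos hr _).ne'
  -- |deriv v| → 0
  have habs : Tendsto (fun r => |deriv v r|) (𝓝[>] (0:ℝ)) (𝓝 0) := by
    have h1 : Tendsto (fun r => |(deriv v r) ^ k|) (𝓝[>] (0:ℝ)) (𝓝 0) := by
      simpa using hDk.abs
    have h2 : ContinuousAt (fun z : ℝ => z ^ (1/(k:ℝ))) 0 :=
      Real.continuousAt_rpow_const 0 _ (Or.inr (by positivity))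
    have h3 := h2.tendsto.comp h1
    rw [Real.zero_rpow (by positivity : 1/(k:ℝ) ≠ 0)] at h3
    refine h3.congr fun r => ?_
    show |(deriv v r) ^ k| ^ (1/(k:ℝ)) = |deriv v r|
    rw [abs_pow, ← Real.rpow_natCast |deriv v r| k, ← Real.rpow_mul (abs_nonneg _),
      mul_one_div, div_self hkne, Real.rpow_one]
  -- first limit
  have hy : Tendsto (fun r => r * deriv v r / (-v r)) (𝓝[>] (0:ℝ)) (𝓝 0) := by
    rw [tendsto_zero_iff_abs_tendsto_zero]
    have hid : Tendsto (fun r : ℝ => |r|) (𝓝[>] (0:ℝ)) (𝓝 0) := by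
      have := tendsto_id.mono_left (nhdsWithin_le_nhds : 𝓝[>] (0:ℝ) ≤ 𝓝 0)
      simpa using this.abs
    have hnum : Tendsto (fun r => |r| * |deriv v r|) (𝓝[>] (0:ℝ)) (𝓝 0) := by
      simpa using hid.mul habs
    have hden : Tendsto (fun r => |(-v r)|) (𝓝[>] (0:ℝ)) (𝓝 1) := by
      simpa using hvt.neg.abs
    have h := hnum.div hden one_ne_zero
    rw [zero_div] at h
    refine h.congr fun r => ?_
    simp [Pi.div_apply, Function.comp, abs_div, abs_mul]
  -- second limit
  have hx : Tendsto (fun r => lam * r ^ ((k:ℝ)+σ) * (-v r) ^ q / (deriv v r) ^ k)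
      (𝓝[>] (0:ℝ)) (𝓝 ((n:ℝ)+σ)) := by
    have hnum : Tendsto (fun r => lam * (-v r) ^ q) (𝓝[>] (0:ℝ)) (𝓝 lam) := by
      simpa using hvq.const_mul lam
    have hlim := hnum.div hR (by positivity : lam / ((n:ℝ)+σ) ≠ 0)
    have hval : lam / (lam / ((n:ℝ)+σ)) = (n:ℝ)+σ := by
      field_simp
    rw [hval] at hlim
    refine hlim.congr' ?_
    filter_upwards [self_mem_nhdsWithin] with r hr
    have hrp : r ^ ((k:ℝ)+σ) ≠ 0 := (Real.rpow_pos_of_pos hr _).ne'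
    simp only [Pi.div_apply]
    rw [div_div_eq_mul_div]
    ring
  -- composition with exp
  have hexp : Tendsto Real.exp atBot (𝓝[>] (0:ℝ)) :=
    tendsto_nhdsWithin_of_tendsto_nhds_of_eventually_within _ Real.tendsto_exp_atBot
      (Eventually.of_forall fun t => Real.exp_pos t)
  have hxe : Tendsto (fun t =>
      lam * Real.exp (((k:ℝ)+σ) * t) * (-v (Real.exp t)) ^ q / (deriv v (Real.exp t)) ^ k)
      atBot (𝓝 ((n:ℝ)+σ)) := by
    have h := hx.comp hexp
    refine h.congr fun t => ?_
    have he : (Real.exp t) ^ ((k:ℝ)+σ) = Real.exp (((k:ℝ)+σ) * t) := by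
      rw [Real.rpow_def_of_pos (Real.exp_pos t), Real.log_exp, mul_comm]
    simp only [Function.comp, he]
  have hye : Tendsto (fun t =>
      Real.exp t * deriv v (Real.exp t) / (-v (Real.exp t))) atBot (𝓝 0) :=
    hy.comp hexp
  exact ⟨hy, hx, hxe.prodMk_nhds hye⟩
end
end
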